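/- arXiv:2103.02457 — 5 statements merged into one kernel-verified Lean document; each statement's English description precedes it below -/
import Mathlib

section
/- Let Y ~ PH(π,T) be a phase-type distributed random variable of dimension p, let Θ be a positive random variable with distribution function F_Θ, independent of Y, and set X = Y/Θ. Then the law of X is absolutely continuous on (0,∞) with Lebesgue density f_X(x) = π (∫_0^∞ θ exp(θ T x) dF_Θ(θ)) t for x > 0, where the integral of the matrix-valued function is taken entrywise and t = −T e. -/
open MeasureTheory ProbabilityTheory Filter Matrix Set
open scoped Topology ENNReal

noncomputable section

/-- A phase-type representation `(π, T)` of dimension `p`: `π` is a probability vector,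
`T` has nonnegative off-diagonal entries, nonpositive row sums, and all eigenvalues of
strictly negative real part. -/
structure IsPHRepr {p : ℕ} (piv : Fin p → ℝ) (T : Matrix (Fin p) (Fin p) ℝ) : Prop where
  pi_nonneg : ∀ i, 0 ≤ piv i
  pi_sum_one : ∑ i, piv i = 1
  offdiag_nonneg : ∀ i j, i ≠ j → 0 ≤ T i j
  rowsum_nonpos : ∀ i, ∑ j, T i j ≤ 0
  eig_neg : ∀ z ∈ spectrum ℂ (T.map (algebraMap ℝ ℂ)), z.re < 0

/-- Survival function `π exp(T y) e` of PH(π,T). -/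
def phSurv {p : ℕ} (piv : Fin p → ℝ) (T : Matrix (Fin p) (Fin p) ℝ) (y : ℝ) : ℝ :=
  ∑ i, ∑ j, piv i * NormedSpace.exp (y • T) i j

/-- Density `π exp(T y) t`, with `t = -T e`, of PH(π,T). -/
def phDens {p : ℕ} (piv : Fin p → ℝ) (T : Matrix (Fin p) (Fin p) ℝ) (y : ℝ) : ℝ :=
  ∑ i, ∑ j, piv i * NormedSpace.exp (y • T) i j * (-∑ k, T j k)

/-- The phase-type distribution PH(π,T): the measure on (0,∞) with Lebesgue density `phDens`. -/
def phMeasure {p : ℕ} (piv : Fin p → ℝ) (T : Matrix (Fin p) (Fin p) ℝ) : Measure ℝ :=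
  volume.withDensity fun y => if 0 < y then ENNReal.ofReal (phDens piv T y) else 0

/-- The law `μ` is regularly varying with index `-α`: the tail is eventually positive and
`μ(λx,∞)/μ(x,∞) → λ^{-α}` as `x → ∞` for every `λ > 0`. -/
def RegVary (μ : Measure ℝ) (α : ℝ) : Prop :=
  (∀ᶠ x in atTop, 0 < μ (Set.Ioi x)) ∧
  ∀ l : ℝ, 0 < l →
    Tendsto (fun x => (μ (Set.Ioi (l * x))).toReal / (μ (Set.Ioi x)).toReal) atTop
      (𝓝 (l ^ (-α)))

/-- Subexponentiality of the law `μ`: positive tail and `(1 - F*F(x))/(1 - F(x)) → 2`. -/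
def Subexponential (μ : Measure ℝ) : Prop :=
  (∀ x : ℝ, 0 < μ (Set.Ioi x)) ∧
  Tendsto (fun x => ((μ.conv μ) (Set.Ioi x)).toReal / (μ (Set.Ioi x)).toReal) atTop (𝓝 2)

/-- The class 𝒜: subexponential laws with `limsup F̄(cx)/F̄(x) < 1` for some `c > 1`. -/
def ClassA (μ : Measure ℝ) : Prop :=
  Subexponential μ ∧ ∃ c : ℝ, 1 < c ∧
    Filter.limsup (fun x => (μ (Set.Ioi (c * x))).toReal / (μ (Set.Ioi x)).toReal) atTop < 1

/-- Extended regular variation: `liminf F̄(λx)/F̄(x) ≥ λ^{-φ}` for some `φ ≥ 0`, all `λ ≥ 1`. -/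
def ExtRegVary (μ : Measure ℝ) : Prop :=
  ∃ φ : ℝ, 0 ≤ φ ∧ ∀ l : ℝ, 1 ≤ l →
    l ^ (-φ) ≤
      Filter.liminf (fun x => (μ (Set.Ioi (l * x))).toReal / (μ (Set.Ioi x)).toReal) atTop

/-- Intermediate regular variation: `lim_{λ↓1} liminf_{x→∞} F̄(λx)/F̄(x) = 1`. -/
def IntRegVary (μ : Measure ℝ) : Prop :=
  Tendsto
    (fun l : ℝ =>
      Filter.liminf (fun x => (μ (Set.Ioi (l * x))).toReal / (μ (Set.Ioi x)).toReal) atTop)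
    (𝓝[>] (1 : ℝ)) (𝓝 1)

/-- Dominated variation: `liminf F̄(λx)/F̄(x) > 0` for some `λ > 1`. -/
def DomVary (μ : Measure ℝ) : Prop :=
  ∃ l : ℝ, 1 < l ∧
    0 < Filter.liminf (fun x => (μ (Set.Ioi (l * x))).toReal / (μ (Set.Ioi x)).toReal) atTop

/-- Long-tailed laws: positive tail and `F̄(x-y)/F̄(x) → 1` for every `y`. -/
def LongTailed (μ : Measure ℝ) : Prop :=
  (∀ x : ℝ, 0 < μ (Set.Ioi x)) ∧
  ∀ y : ℝ,
    Tendsto (fun x => (μ (Set.Ioi (x - y))).toReal / (μ (Set.Ioi x)).toReal) atTop (𝓝 1)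

/-- `μY` is α-regular-variation determining: for every law `μZ` of a nonnegative random
variable (taken independent of `Y`, i.e. via the product measure), regular variation with
index `-α` of the law of the product implies that of `μZ`. -/
def IsRVD (μY : Measure ℝ) (α : ℝ) : Prop :=
  ∀ μZ : Measure ℝ, IsProbabilityMeasure μZ → μZ (Set.Iio 0) = 0 →
    RegVary (Measure.map (fun q : ℝ × ℝ => q.1 * q.2) (μY.prod μZ)) α → RegVary μZ α


lemma exp_entry_nonneg_of_nonneg {p : ℕ} (M : Matrix (Fin p) (Fin p) ℝ)
    (h : ∀ i j, 0 ≤ M i j) (i j : Fin p) : 0 ≤ NormedSpace.exp M i j := by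
  letI : SeminormedRing (Matrix (Fin p) (Fin p) ℝ) := Matrix.linftyOpSemiNormedRing
  letI : NormedRing (Matrix (Fin p) (Fin p) ℝ) := Matrix.linftyOpNormedRing
  letI : NormedAlgebra ℝ (Matrix (Fin p) (Fin p) ℝ) := Matrix.linftyOpNormedAlgebra
  have hsum : HasSum (fun n : ℕ => (n.factorial : ℝ)⁻¹ • M ^ n) (NormedSpace.exp M) := by
    rw [NormedSpace.exp_eq_tsum ℝ]
    exact (NormedSpace.expSeries_summable' (𝕂 := ℝ) M).hasSum
  have hij : HasSum (fun n : ℕ => ((n.factorial : ℝ)⁻¹ • M ^ n) i j)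
      (NormedSpace.exp M i j) := Pi.hasSum.mp (Pi.hasSum.mp hsum i) j
  refine hij.nonneg fun n => ?_
  have hpow : ∀ n : ℕ, ∀ i j, 0 ≤ (M ^ n) i j := by
    intro n
    induction n with
    | zero => intro i j; by_cases hij' : i = j <;> simp [pow_zero, Matrix.one_apply, hij']
    | succ n ih =>
      intro i j
      rw [pow_succ, Matrix.mul_apply]
      exact Finset.sum_nonneg fun k _ => mul_nonneg (ih i k) (h k j)
  simpa using mul_nonneg (by positivity) (hpow n i j)

lemma exp_entry_nonneg_of_offdiag {p : ℕ} (M : Matrix (Fin p) (Fin p) ℝ)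
    (h : ∀ i j, i ≠ j → 0 ≤ M i j) (i j : Fin p) : 0 ≤ NormedSpace.exp M i j := by
  letI : SeminormedRing (Matrix (Fin p) (Fin p) ℝ) := Matrix.linftyOpSemiNormedRing
  letI : NormedRing (Matrix (Fin p) (Fin p) ℝ) := Matrix.linftyOpNormedRing
  letI : NormedAlgebra ℝ (Matrix (Fin p) (Fin p) ℝ) := Matrix.linftyOpNormedAlgebra
  set c : ℝ := ∑ k, |M k k| with hc
  have hM : M = (-c) • (1 : Matrix (Fin p) (Fin p) ℝ) + (M + c • 1) := by module
  have hcomm : Commute ((-c) • (1 : Matrix (Fin p) (Fin p) ℝ)) (M + c • 1) :=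
    (Commute.one_left _).smul_left _
  have hN : ∀ i j, 0 ≤ (M + c • (1 : Matrix (Fin p) (Fin p) ℝ)) i j := by
    intro i j
    by_cases hij : i = j
    · subst hij
      simp only [Matrix.add_apply, Matrix.smul_apply, Matrix.one_apply_eq, smul_eq_mul, mul_one]
      have : |M i i| ≤ c := Finset.single_le_sum (f := fun k => |M k k|)
        (fun k _ => abs_nonneg _) (Finset.mem_univ i)
      linarith [neg_abs_le (M i i)]
    · simpa [Matrix.add_apply, Matrix.one_apply_ne hij] using h i j hij
  rw [hM, Matrix.exp_add_of_commute _ _ hcomm]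
  have h1 : NormedSpace.exp ((-c) • (1 : Matrix (Fin p) (Fin p) ℝ)) = Real.exp (-c) • 1 := by
    rw [← Algebra.algebraMap_eq_smul_one]
    convert (NormedSpace.algebraMap_exp_comm (𝕂 := ℝ) (𝔸 := Matrix (Fin p) (Fin p) ℝ) (-c)).symm using 1
    · rfl
    · rw [Algebra.algebraMap_eq_smul_one, ← Real.exp_eq_exp_ℝ]
  rw [h1, Matrix.smul_mul, Matrix.one_mul, Matrix.smul_apply]
  exact mul_nonneg (Real.exp_pos _).le (exp_entry_nonneg_of_nonneg _ hN i j)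

lemma exp_entry_continuous_comp {p : ℕ} {α : Type*} [TopologicalSpace α]
    {f : α → ℝ} (hf : Continuous f) (T : Matrix (Fin p) (Fin p) ℝ) (i j : Fin p) :
    Continuous fun a => NormedSpace.exp (f a • T) i j := by
  letI : SeminormedRing (Matrix (Fin p) (Fin p) ℝ) := Matrix.linftyOpSemiNormedRing
  letI : NormedRing (Matrix (Fin p) (Fin p) ℝ) := Matrix.linftyOpNormedRing
  letI : NormedAlgebra ℝ (Matrix (Fin p) (Fin p) ℝ) := Matrix.linftyOpNormedAlgebra
  have h1 : Continuous fun a => NormedSpace.exp (f a • T) :=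
    (continuous_iff_continuousAt.2 fun x => (NormedSpace.exp_analytic (𝕂 := ℝ) x).continuousAt).comp (hf.smul continuous_const)
  exact (continuous_apply j).comp ((continuous_apply i).comp h1)

lemma phDens_continuous {p : ℕ} (piv : Fin p → ℝ) (T : Matrix (Fin p) (Fin p) ℝ) :
    Continuous (phDens piv T) := by
  unfold phDens
  refine continuous_finset_sum _ fun i _ => continuous_finset_sum _ fun j _ => ?_
  exact (continuous_const.mul (exp_entry_continuous_comp continuous_id T i j)).mul continuous_const


/-- the law of `X = Y/Θ` is absolutely continuous on `(0,∞)` with Lebesgue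
density `f_X(x) = π (∫₀^∞ θ exp(θ T x) dF_Θ(θ)) t` for `x > 0`, with `t = -T e`. -/
theorem cph_density
    {Ω : Type*} [MeasureSpace Ω] [IsProbabilityMeasure (ℙ : Measure Ω)]
    {p : ℕ} (piv : Fin p → ℝ) (T : Matrix (Fin p) (Fin p) ℝ) (hPH : IsPHRepr piv T)
    (Y Θ : Ω → ℝ) (hYm : Measurable Y) (hΘm : Measurable Θ)
    (hInd : IndepFun Y Θ ℙ)
    (hΘpos : ∀ᵐ ω ∂ℙ, 0 < Θ ω)
    (hYlaw : Measure.map Y ℙ = phMeasure piv T) :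
    Measure.map (fun ω => Y ω / Θ ω) ℙ
      = volume.withDensity fun x =>
          if 0 < x then
            ENNReal.ofReal
              (∑ i, ∑ j, piv i *
                (∫ θ, θ * NormedSpace.exp ((θ * x) • T) i j ∂(Measure.map Θ ℙ)) *
                (-∑ k, T j k))
          else 0 := by
  classical
  set μΘ : Measure ℝ := Measure.map Θ ℙ with hμΘ
  haveI : IsProbabilityMeasure μΘ := Measure.isProbabilityMeasure_map hΘm.aemeasurable
  haveI hYprob : IsProbabilityMeasure (phMeasure piv T) :=
    hYlaw ▸ Measure.isProbabilityMeasure_map hYm.aemeasurable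
  have hθae : ∀ᵐ θ ∂μΘ, 0 < θ :=
    (ae_map_iff hΘm.aemeasurable measurableSet_Ioi).mpr hΘpos
  have hdivm : Measurable fun q : ℝ × ℝ => q.1 / q.2 := measurable_fst.div measurable_snd
  have hgm : Measurable fun y => if 0 < y then ENNReal.ofReal (phDens piv T y) else 0 :=
    Measurable.ite measurableSet_Ioi
      (ENNReal.measurable_ofReal.comp (phDens_continuous piv T).measurable) measurable_const
  set G : ℝ × ℝ → ℝ≥0∞ := fun q =>
    if 0 < q.2 then ENNReal.ofReal (q.1 * phDens piv T (q.1 * q.2)) else 0 with hG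
  have hGm : Measurable G := by
    refine Measurable.ite (measurable_snd measurableSet_Ioi) ?_ measurable_const
    exact ENNReal.measurable_ofReal.comp
      (measurable_fst.mul ((phDens_continuous piv T).measurable.comp
        (measurable_fst.mul measurable_snd)))
  set H : ℝ → ℝ≥0∞ := fun x => ∫⁻ θ, G (θ, x) ∂μΘ with hH
  have hHm : Measurable H := (hGm.comp measurable_swap).lintegral_prod_right'
  -- scaling change of variables
  have hscale : ∀ θ : ℝ, 0 < θ → ∀ s : Set ℝ, MeasurableSet s →
      phMeasure piv T ((fun y => y / θ) ⁻¹' s) = ∫⁻ x in s, G (θ, x) ∂volume := by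
    intro θ hθ s hs
    have hpre : MeasurableSet ((fun y => y / θ) ⁻¹' s) := (measurable_div_const θ) hs
    set F : ℝ → ℝ≥0∞ := ((fun y => y / θ) ⁻¹' s).indicator
        (fun y => if 0 < y then ENNReal.ofReal (phDens piv T y) else 0) with hF
    have hFm : Measurable F := hgm.indicator hpre
    have hFc : Measurable fun x => F (θ * x) := hFm.comp (measurable_const_mul θ)
    have hmap : Measure.map (fun x => θ * x) volume = ENNReal.ofReal |θ⁻¹| • volume :=
      Real.map_volume_mul_left (ne_of_gt hθ)
    have e1 : ENNReal.ofReal |θ⁻¹| * ∫⁻ y, F y ∂volume = ∫⁻ x, F (θ * x) ∂volume := by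
      rw [← smul_eq_mul, ← lintegral_smul_measure, ← hmap, lintegral_map hFm (measurable_const_mul θ)]
    have e2 : ∫⁻ y, F y ∂volume = ∫⁻ x, ENNReal.ofReal |θ| * F (θ * x) ∂volume := by
      rw [lintegral_const_mul _ hFc, ← e1, ← mul_assoc, ← ENNReal.ofReal_mul (abs_nonneg _),
        abs_inv, mul_inv_cancel₀ (by positivity : |θ| ≠ 0), ENNReal.ofReal_one, one_mul]
    rw [phMeasure, withDensity_apply _ hpre, ← lintegral_indicator hpre, ← hF, e2,
      ← lintegral_indicator hs]
    refine lintegral_congr fun x => ?_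
    simp only [hF]
    by_cases hx : x ∈ s
    · have hmem : θ * x ∈ (fun y => y / θ) ⁻¹' s := by
        simp [Set.mem_preimage, mul_div_cancel_left₀ _ (ne_of_gt hθ), hx]
      rw [Set.indicator_of_mem hmem, Set.indicator_of_mem hx]
      simp only [hG]
      by_cases hxpos : 0 < x
      · rw [if_pos (mul_pos hθ hxpos), if_pos hxpos, abs_of_pos hθ,
          ← ENNReal.ofReal_mul hθ.le]
      · have : ¬ 0 < θ * x := not_lt.mpr (by nlinarith [not_lt.mp hxpos])
        rw [if_neg this, if_neg hxpos, mul_zero]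
    · have hmem : θ * x ∉ (fun y => y / θ) ⁻¹' s := by
        simp [Set.mem_preimage, mul_div_cancel_left₀ _ (ne_of_gt hθ), hx]
      rw [Set.indicator_of_notMem hmem, Set.indicator_of_notMem hx, mul_zero]
  -- main identity
  have key : Measure.map (fun ω => Y ω / Θ ω) ℙ = volume.withDensity H := by
    have h1 : Measure.map (fun ω => Y ω / Θ ω) ℙ
        = Measure.map (fun q : ℝ × ℝ => q.1 / q.2) ((phMeasure piv T).prod μΘ) := by
      rw [← hYlaw,
        ← (indepFun_iff_map_prod_eq_prod_map_map hYm.aemeasurable hΘm.aemeasurable).mp hInd,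
        Measure.map_map hdivm (hYm.prodMk hΘm)]
      rfl
    rw [h1]
    ext s hs
    rw [Measure.map_apply hdivm hs, Measure.prod_apply_symm (hdivm hs), withDensity_apply _ hs]
    have h2 : ∫⁻ θ, phMeasure piv T ((fun y => (y, θ)) ⁻¹' ((fun q : ℝ × ℝ => q.1 / q.2) ⁻¹' s)) ∂μΘ
        = ∫⁻ θ, ∫⁻ x in s, G (θ, x) ∂volume ∂μΘ := by
      refine lintegral_congr_ae (hθae.mono fun θ hθ => ?_)
      exact hscale θ hθ s hs
    rw [h2]
    exact lintegral_lintegral_swap (hGm.aemeasurable)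
  rw [key]
  refine withDensity_congr_ae ?_
  -- a.e. identification of the density
  have hfin : ∫⁻ x, H x ∂volume ≠ ⊤ := by
    have : ∫⁻ x, H x ∂volume = (volume.withDensity H) Set.univ := by
      rw [withDensity_apply _ MeasurableSet.univ, Measure.restrict_univ]
    rw [this, ← key]
    haveI : IsProbabilityMeasure (Measure.map (fun ω => Y ω / Θ ω) ℙ) :=
      Measure.isProbabilityMeasure_map (hYm.div hΘm).aemeasurable
    simp
  filter_upwards [ae_lt_top hHm hfin] with x hx
  by_cases hxpos : 0 < x
  · rw [if_pos hxpos]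
    have hexpnn : ∀ θ : ℝ, 0 < θ → ∀ i j : Fin p,
        0 ≤ NormedSpace.exp ((θ * x) • T) i j := by
      intro θ hθ i j
      refine exp_entry_nonneg_of_offdiag ((θ * x) • T) (fun a b hab => ?_) i j
      simpa [Matrix.smul_apply, smul_eq_mul] using
        mul_nonneg (mul_nonneg hθ.le hxpos.le) (hPH.offdiag_nonneg a b hab)
    have hEm : ∀ i j : Fin p, Measurable fun θ : ℝ => θ * NormedSpace.exp ((θ * x) • T) i j :=
      fun i j => measurable_id.mul
        (exp_entry_continuous_comp (continuous_id.mul continuous_const) T i j).measurable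
    have hEnn : ∀ i j : Fin p, 0 ≤ᵐ[μΘ] fun θ : ℝ => θ * NormedSpace.exp ((θ * x) • T) i j :=
      fun i j => hθae.mono fun θ hθ => mul_nonneg hθ.le (hexpnn θ hθ i j)
    have hann : ∀ i j : Fin p, 0 ≤ piv i * (-∑ k, T j k) := fun i j =>
      mul_nonneg (hPH.pi_nonneg i) (by linarith [hPH.rowsum_nonpos j])
    have h1 : H x = ∑ i, ∑ j, ENNReal.ofReal (piv i * (-∑ k, T j k)) *
        ∫⁻ θ, ENNReal.ofReal (θ * NormedSpace.exp ((θ * x) • T) i j) ∂μΘ := by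
      have hpt : ∀ θ : ℝ, 0 < θ →
          G (θ, x) = ∑ i, ∑ j, ENNReal.ofReal (piv i * (-∑ k, T j k)) *
            ENNReal.ofReal (θ * NormedSpace.exp ((θ * x) • T) i j) := by
        intro θ hθ
        simp only [hG, if_pos hxpos]
        have hexp : θ * phDens piv T (θ * x)
            = ∑ i, ∑ j, (piv i * (-∑ k, T j k)) *
              (θ * NormedSpace.exp ((θ * x) • T) i j) := by
          rw [phDens, Finset.mul_sum]
          refine Finset.sum_congr rfl fun i _ => ?_
          rw [Finset.mul_sum]
          exact Finset.sum_congr rfl fun j _ => by ring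
        rw [hexp,
          ENNReal.ofReal_sum_of_nonneg fun i _ => Finset.sum_nonneg fun j _ =>
            mul_nonneg (hann i j) (mul_nonneg hθ.le (hexpnn θ hθ i j))]
        refine Finset.sum_congr rfl fun i _ => ?_
        rw [ENNReal.ofReal_sum_of_nonneg fun j _ =>
          mul_nonneg (hann i j) (mul_nonneg hθ.le (hexpnn θ hθ i j))]
        exact Finset.sum_congr rfl fun j _ => ENNReal.ofReal_mul (hann i j)
      calc H x = ∫⁻ θ, (∑ i, ∑ j, ENNReal.ofReal (piv i * (-∑ k, T j k)) *
            ENNReal.ofReal (θ * NormedSpace.exp ((θ * x) • T) i j)) ∂μΘ :=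
          lintegral_congr_ae (hθae.mono fun θ hθ => hpt θ hθ)
        _ = _ := by
          rw [lintegral_finset_sum _ (fun i _ => Finset.measurable_sum _ fun j _ =>
            (hEm i j).ennreal_ofReal.const_mul _)]
          refine Finset.sum_congr rfl fun i _ => ?_
          rw [lintegral_finset_sum _ (fun j _ =>
            (hEm i j).ennreal_ofReal.const_mul _)]
          refine Finset.sum_congr rfl fun j _ => ?_
          exact lintegral_const_mul _ (hEm i j).ennreal_ofReal
    have hBnn : ∀ i j : Fin p,
        0 ≤ ∫ θ, θ * NormedSpace.exp ((θ * x) • T) i j ∂μΘ :=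
      fun i j => integral_nonneg_of_ae (hEnn i j)
    have h2 : ENNReal.ofReal (∑ i, ∑ j, piv i *
          (∫ θ, θ * NormedSpace.exp ((θ * x) • T) i j ∂μΘ) * (-∑ k, T j k))
        = ∑ i, ∑ j, ENNReal.ofReal (piv i * (-∑ k, T j k)) *
          ENNReal.ofReal (∫ θ, θ * NormedSpace.exp ((θ * x) • T) i j ∂μΘ) := by
      have tnn : ∀ i j : Fin p, 0 ≤ piv i *
          (∫ θ, θ * NormedSpace.exp ((θ * x) • T) i j ∂μΘ) * (-∑ k, T j k) := fun i j => by
        have := hann i j; have := hBnn i j; nlinarith [hPH.pi_nonneg i]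
      rw [ENNReal.ofReal_sum_of_nonneg fun i _ => Finset.sum_nonneg fun j _ => tnn i j]
      refine Finset.sum_congr rfl fun i _ => ?_
      rw [ENNReal.ofReal_sum_of_nonneg fun j _ => tnn i j]
      refine Finset.sum_congr rfl fun j _ => ?_
      rw [show piv i * (∫ θ, θ * NormedSpace.exp ((θ * x) • T) i j ∂μΘ) * (-∑ k, T j k)
          = (piv i * (-∑ k, T j k)) *
            (∫ θ, θ * NormedSpace.exp ((θ * x) • T) i j ∂μΘ) from by ring,
        ENNReal.ofReal_mul (hann i j)]
    rw [h1, h2]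
    have hterm : ∀ i j : Fin p, ENNReal.ofReal (piv i * (-∑ k, T j k)) *
        ∫⁻ θ, ENNReal.ofReal (θ * NormedSpace.exp ((θ * x) • T) i j) ∂μΘ < ⊤ := by
      intro i j
      have hx' := hx
      rw [h1] at hx'
      have h3 := (ENNReal.sum_lt_top.mp hx') i (Finset.mem_univ i)
      exact (ENNReal.sum_lt_top.mp h3) j (Finset.mem_univ j)
    refine Finset.sum_congr rfl fun i _ => Finset.sum_congr rfl fun j _ => ?_
    by_cases hz : piv i * (-∑ k, T j k) = 0
    · rw [hz, ENNReal.ofReal_zero, zero_mul, zero_mul]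
    · have hzpos : 0 < piv i * (-∑ k, T j k) := lt_of_le_of_ne (hann i j) (Ne.symm hz)
      have hIfin : (∫⁻ θ, ENNReal.ofReal
          (θ * NormedSpace.exp ((θ * x) • T) i j) ∂μΘ) ≠ ⊤ := by
        intro hI
        have h4 := hterm i j
        rw [hI, ENNReal.mul_top (ENNReal.ofReal_pos.mpr hzpos).ne'] at h4
        exact absurd h4 (lt_irrefl _)
      have hint : Integrable (fun θ => θ * NormedSpace.exp ((θ * x) • T) i j) μΘ := by
        refine ⟨(hEm i j).aestronglyMeasurable, ?_⟩
        rw [hasFiniteIntegral_iff_ofReal (hEnn i j)]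
        exact lt_top_iff_ne_top.mpr hIfin
      congr 1
      exact (ofReal_integral_eq_lintegral_ofReal hint (hEnn i j)).symm
  · simp only [hH, hG, if_neg hxpos, lintegral_zero]
end
end

section
/- Let C be a family of probability measures on (0,∞) that contains a sequence converging weakly to the Dirac measure at some constant c > 0. Then the class D of continuous scaled phase-type laws built from C is weakly dense in the set of all probability measures on (0,∞): for every probability measure μ on (0,∞) there exist measures ν_n ∈ C and phase-type distributions PH(π_n, T_n) such that, taking Θ_n with law ν_n and Y_n ~ PH(π_n, T_n) independent, the law of Y_n/Θ_n converges weakly to μ as n → ∞. -/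
open MeasureTheory ProbabilityTheory Filter Matrix Set
open scoped Topology ENNReal

noncomputable section

namespace CPHAux

/-- shift (nilpotent) matrix -/
def Nsh (M : ℕ) : Matrix (Fin (M+1)) (Fin (M+1)) ℝ :=
  fun i j => if (j:ℕ) = (i:ℕ) + 1 then 1 else 0

/-- the Erlang-mixture generator -/
def matT (M : ℕ) (r : ℝ) : Matrix (Fin (M+1)) (Fin (M+1)) ℝ :=
  fun i j => if (j:ℕ) = (i:ℕ) + 1 then r else if j = i then -r else 0

lemma Nsh_pow (M k : ℕ) (i j : Fin (M+1)) :
    (Nsh M ^ k) i j = if (j:ℕ) = (i:ℕ) + k then 1 else 0 := by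
  induction k generalizing j with
  | zero =>
    simp only [pow_zero, Matrix.one_apply, Nat.add_zero]
    congr 1
    simp [Fin.ext_iff, eq_comm]
  | succ k ih =>
    rw [pow_succ, Matrix.mul_apply]
    by_cases h : (i:ℕ) + k ≤ M
    · rw [Finset.sum_eq_single (⟨(i:ℕ)+k, Nat.lt_succ_of_le h⟩ : Fin (M+1))]
      · rw [ih]
        simp [Nsh, Nat.add_assoc]
      · intro l _ hl
        rw [ih]
        rw [if_neg, zero_mul]
        intro hc
        exact hl (Fin.ext hc)
      · intro hmem; exact absurd (Finset.mem_univ _) hmem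
    · have h1 : ∀ l : Fin (M+1), (Nsh M ^ k) i l = 0 := by
        intro l
        rw [ih, if_neg]
        intro hc
        exact h (hc ▸ l.isLt |> Nat.lt_succ_iff.mp)
      simp only [h1, zero_mul, Finset.sum_const_zero]
      rw [if_neg]
      intro hc
      have := j.isLt
      omega
  done

lemma Nsh_pow_zero (M k : ℕ) (hk : M + 1 ≤ k) : (Nsh M) ^ k = 0 := by
  ext i j
  rw [Nsh_pow, if_neg]
  · rfl
  · have := j.isLt
    omega

lemma exp_c_Nsh (M : ℕ) (c : ℝ) (i j : Fin (M+1)) :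
    NormedSpace.exp (c • Nsh M) i j =
      if (i:ℕ) ≤ (j:ℕ) then c ^ ((j:ℕ)-(i:ℕ)) / ((j:ℕ)-(i:ℕ)).factorial else 0 := by
  rw [NormedSpace.exp_eq_tsum ℝ]
  simp only []
  show (∑' (n:ℕ), ((n.factorial:ℝ)⁻¹ • (c • Nsh M) ^ n)) i j = _
  have hz : ∀ k ∉ Finset.range (M+1), ((k.factorial : ℝ)⁻¹ • (c • Nsh M) ^ k) = 0 := by
    intro k hk
    rw [Finset.mem_range, not_lt] at hk
    rw [smul_pow, Nsh_pow_zero M k hk, smul_zero, smul_zero]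
  rw [tsum_eq_sum hz]
  have : ∀ k, ((k.factorial : ℝ)⁻¹ • (c • Nsh M) ^ k) i j
      = (c ^ k / k.factorial) * (if (j:ℕ) = (i:ℕ) + k then 1 else 0) := by
    intro k
    rw [smul_pow]
    simp only [Matrix.smul_apply, smul_eq_mul, Nsh_pow]
    ring
  rw [Matrix.sum_apply]
  · simp only [this]
    by_cases hij : (i:ℕ) ≤ (j:ℕ)
    · rw [if_pos hij, Finset.sum_eq_single ((j:ℕ) - (i:ℕ))]
      · rw [if_pos (by omega), mul_one]
      · intro k _ hk
        rw [if_neg (by omega), mul_zero]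
      · intro hmem
        exfalso
        apply hmem
        rw [Finset.mem_range]
        have := j.isLt
        omega
    · rw [if_neg hij]
      apply Finset.sum_eq_zero
      intro k _
      rw [if_neg (by omega), mul_zero]

lemma matT_split (M : ℕ) (r y : ℝ) :
    y • matT M r = (-(r*y)) • (1 : Matrix (Fin (M+1)) (Fin (M+1)) ℝ) + (r*y) • Nsh M := by
  ext i j
  simp only [Matrix.smul_apply, Matrix.add_apply, Matrix.one_apply, matT, Nsh, smul_eq_mul]
  by_cases h1 : (j:ℕ) = (i:ℕ) + 1
  · have h2 : ¬ i = j := by intro h; rw [h] at h1; omega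
    rw [if_pos h1, if_neg h2, if_pos h1]; ring
  · rw [if_neg h1, if_neg h1, mul_zero, add_zero]
    by_cases h2 : j = i
    · rw [if_pos h2, if_pos h2.symm]; ring
    · rw [if_neg h2, if_neg (fun h => h2 h.symm), mul_zero, mul_zero]


/-- Erlang density with shape `k+1`, rate `r`. -/
def erlDens (k : ℕ) (r : ℝ) (y : ℝ) : ℝ :=
  r * Real.exp (-(r * y)) * (r * y) ^ k / k.factorial

lemma exp_matT (M : ℕ) (r y : ℝ) (i j : Fin (M+1)) :
    NormedSpace.exp (y • matT M r) i j =
      Real.exp (-(r*y)) *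
        (if (i:ℕ) ≤ (j:ℕ) then (r*y) ^ ((j:ℕ)-(i:ℕ)) / ((j:ℕ)-(i:ℕ)).factorial else 0) := by
  rw [matT_split]
  rw [Matrix.exp_add_of_commute _ _ (((Commute.one_left _).smul_left _).smul_right _)]
  have h1 : (-(r*y)) • (1 : Matrix (Fin (M+1)) (Fin (M+1)) ℝ)
      = Matrix.diagonal (fun _ => -(r*y)) := Matrix.smul_one_eq_diagonal _
  rw [h1, Matrix.exp_diagonal]
  rw [Matrix.diagonal_mul]
  rw [exp_c_Nsh]
  congr 1
  rw [Pi.coe_exp, ← Real.exp_eq_exp_ℝ]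

lemma matT_rowsum (M : ℕ) (r : ℝ) (j : Fin (M+1)) :
    (- ∑ k, matT M r j k) = if (j:ℕ) = M then r else 0 := by
  have hsplit : ∀ k : Fin (M+1), matT M r j k =
      (if (k:ℕ) = (j:ℕ) + 1 then r else 0) + (if k = j then -r else 0) := by
    intro k
    simp only [matT]
    by_cases h1 : (k:ℕ) = (j:ℕ) + 1
    · have h2 : ¬ k = j := by intro h; rw [h] at h1; omega
      rw [if_pos h1, if_pos h1, if_neg h2, add_zero]
    · rw [if_neg h1, if_neg h1, zero_add]
  simp only [hsplit, Finset.sum_add_distrib]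
  rw [Finset.sum_ite_eq' Finset.univ j (fun _ => -r), if_pos (Finset.mem_univ _)]
  by_cases h : (j:ℕ) = M
  · rw [if_pos h]
    have hz : ∀ k : Fin (M+1), (if (k:ℕ) = (j:ℕ) + 1 then r else 0) = 0 := by
      intro k
      rw [if_neg]
      have := k.isLt
      omega
    simp only [hz, Finset.sum_const_zero, zero_add]
    ring
  · rw [if_neg h]
    have hlt : (j:ℕ) + 1 < M + 1 := by have := j.isLt; omega
    rw [Finset.sum_eq_single (⟨(j:ℕ)+1, hlt⟩ : Fin (M+1))]
    · rw [if_pos rfl]; ring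
    · intro l _ hl
      rw [if_neg]
      intro hc
      exact hl (Fin.ext hc)
    · intro hmem; exact absurd (Finset.mem_univ _) hmem

lemma phDens_matT (M : ℕ) (r y : ℝ) (piv : Fin (M+1) → ℝ) :
    phDens piv (matT M r) y = ∑ i, piv i * erlDens (M - (i:ℕ)) r y := by
  unfold phDens
  have hrs : ∀ j : Fin (M+1), (-∑ k, matT M r j k) = if (j:ℕ) = M then r else 0 :=
    matT_rowsum M r
  refine Finset.sum_congr rfl fun i _ => ?_
  have hlast : ((Fin.last M : Fin (M+1)) : ℕ) = M := rfl
  rw [Finset.sum_eq_single (Fin.last M)]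
  · rw [show (∑ k, matT M r (Fin.last M) k) = - (if ((Fin.last M : Fin (M+1)):ℕ) = M then r else 0) by
      rw [← hrs (Fin.last M)]; ring]
    rw [exp_matT]
    simp only [hlast, if_pos rfl]
    rw [if_pos (Nat.lt_succ_iff.mp i.isLt)]
    unfold erlDens
    rw [neg_neg]
    field_simp
    simp only [↓reduceIte]
    ring
  · intro j _ hj
    have hc : ¬ ((j:ℕ) = M) := by
      intro hc; exact hj (Fin.ext (by simp [hc]))
    rw [hrs j, if_neg hc, mul_zero]
  · intro hmem; exact absurd (Finset.mem_univ _) hmem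


lemma isPHRepr_matT (M : ℕ) (r : ℝ) (hr : 0 < r) (piv : Fin (M+1) → ℝ)
    (h0 : ∀ i, 0 ≤ piv i) (h1 : ∑ i, piv i = 1) : IsPHRepr piv (matT M r) := by
  refine ⟨h0, h1, ?_, ?_, ?_⟩
  · intro i j hij
    unfold matT
    split_ifs with a b
    · exact hr.le
    · exact absurd b.symm hij
    · exact le_refl 0
  · intro i
    have h := matT_rowsum M r i
    by_cases hc : (i:ℕ) = M
    · rw [if_pos hc] at h; linarith
    · rw [if_neg hc] at h; linarith
  · intro z hz
    rw [spectrum.mem_iff] at hz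
    set A := (matT M r).map (algebraMap ℝ ℂ) with hA
    have htri : (algebraMap ℂ (Matrix (Fin (M+1)) (Fin (M+1)) ℂ) z - A).BlockTriangular id := by
      apply Matrix.BlockTriangular.sub
      · rw [Matrix.algebraMap_eq_diagonal]
        exact Matrix.blockTriangular_diagonal _
      · intro i j hji
        simp only [hA, Matrix.map_apply, matT]
        rw [if_neg (by simp only [id] at hji; omega), if_neg (by intro h; rw [h] at hji; exact lt_irrefl _ hji), map_zero]
    have hdiag : ∀ i : Fin (M+1),
        (algebraMap ℂ (Matrix (Fin (M+1)) (Fin (M+1)) ℂ) z - A) i i = z + r := by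
      intro i
      have hm : matT M r i i = -r := by
        unfold matT
        rw [if_neg (by omega), if_pos rfl]
      rw [Matrix.sub_apply, Matrix.algebraMap_matrix_apply, if_pos rfl, hA, Matrix.map_apply, hm,
        map_neg, sub_neg_eq_add]
      norm_num [Algebra.algebraMap_self]
    have hdet : Matrix.det (algebraMap ℂ (Matrix (Fin (M+1)) (Fin (M+1)) ℂ) z - A)
        = (z + r)^(M+1) := by
      rw [Matrix.det_of_upperTriangular htri]
      rw [Finset.prod_congr rfl (fun i _ => hdiag i), Finset.prod_const, Finset.card_univ,
        Fintype.card_fin]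
    have hz0 : (z + (r:ℂ))^(M+1) = 0 := by
      by_contra h
      exact hz ((Matrix.isUnit_iff_isUnit_det _).mpr (by rw [hdet]; exact isUnit_iff_ne_zero.mpr h))
    have hzr : z = -(r:ℂ) := by
      have := pow_eq_zero_iff (Nat.succ_ne_zero M) |>.mp hz0
      linear_combination this
    rw [hzr]
    simpa using hr

/-- indicator version of Erlang density -/
def erlInd (k : ℕ) (r : ℝ) : ℝ → ℝ := fun y => if 0 < y then erlDens k r y else 0

/-- Erlang measure -/
def erlM (k : ℕ) (r : ℝ) : Measure ℝ :=
  volume.withDensity fun y => ENNReal.ofReal (erlInd k r y)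

lemma erlDens_nonneg {k : ℕ} {r : ℝ} (hr : 0 < r) {y : ℝ} (hy : 0 < y) : 0 ≤ erlDens k r y := by
  unfold erlDens; positivity

lemma erlInd_nonneg {k : ℕ} {r : ℝ} (hr : 0 < r) (y : ℝ) : 0 ≤ erlInd k r y := by
  unfold erlInd; split_ifs with h
  · exact erlDens_nonneg hr h
  · exact le_refl 0

lemma erlDens_continuous (k : ℕ) (r : ℝ) : Continuous (erlDens k r) := by
  unfold erlDens; fun_prop

lemma erlInd_measurable (k : ℕ) (r : ℝ) : Measurable (erlInd k r) := by
  unfold erlInd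
  exact Measurable.ite measurableSet_Ioi (erlDens_continuous k r).measurable measurable_const

lemma erlInd_ae_eq_gammaPDF {k : ℕ} {r : ℝ} (hr : 0 < r) :
    (fun y => ENNReal.ofReal (erlInd k r y)) =ᵐ[volume] gammaPDF ((k:ℝ)+1) r := by
  have hae : ∀ᵐ (y:ℝ) ∂volume, y ≠ (0:ℝ) := by
    refine ae_iff.mpr ?_
    have hset : {a : ℝ | ¬ a ≠ 0} = {(0:ℝ)} := by ext y; simp
    rw [hset]
    exact measure_singleton 0
  filter_upwards [hae] with y hy
  rcases lt_or_gt_of_ne hy with hneg | hpos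
  · rw [gammaPDF_of_neg hneg]
    unfold erlInd
    rw [if_neg (by linarith), ENNReal.ofReal_zero]
  · rw [gammaPDF_of_nonneg hpos.le]
    unfold erlInd erlDens
    rw [if_pos hpos]
    congr 1
    rw [Real.Gamma_nat_eq_factorial]
    rw [show ((k:ℝ)+1) - 1 = ((k:ℕ):ℝ) by push_cast; ring]
    rw [Real.rpow_natCast y k]
    rw [show ((k:ℝ)+1) = ((k+1:ℕ):ℝ) by push_cast; ring, Real.rpow_natCast r (k+1)]
    rw [mul_pow, pow_succ]
    field_simp

lemma lintegral_erlInd {k : ℕ} {r : ℝ} (hr : 0 < r) :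
    ∫⁻ y, ENNReal.ofReal (erlInd k r y) = 1 := by
  rw [lintegral_congr_ae (erlInd_ae_eq_gammaPDF hr)]
  exact lintegral_gammaPDF_eq_one (by positivity) hr

lemma erlM_prob {k : ℕ} {r : ℝ} (hr : 0 < r) : IsProbabilityMeasure (erlM k r) := by
  constructor
  rw [erlM, withDensity_apply _ MeasurableSet.univ, setLIntegral_univ, lintegral_erlInd hr]

lemma erlInd_integrable {k : ℕ} {r : ℝ} (hr : 0 < r) : Integrable (erlInd k r) := by
  refine ⟨(erlInd_measurable k r).aestronglyMeasurable, ?_⟩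
  rw [hasFiniteIntegral_iff_norm]
  have : ∀ y, ENNReal.ofReal ‖erlInd k r y‖ = ENNReal.ofReal (erlInd k r y) := by
    intro y
    rw [Real.norm_of_nonneg (erlInd_nonneg hr y)]
  simp_rw [this, lintegral_erlInd hr]
  exact ENNReal.one_lt_top

lemma integral_erlInd {k : ℕ} {r : ℝ} (hr : 0 < r) : ∫ y, erlInd k r y = 1 := by
  rw [integral_eq_lintegral_of_nonneg_ae (Filter.Eventually.of_forall (erlInd_nonneg hr))
    (erlInd_measurable k r).aestronglyMeasurable, lintegral_erlInd hr, ENNReal.toReal_one]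

/-- integral against a `withDensity` of a nonneg real function -/
lemma integral_wd (g : ℝ → ℝ) (hg : Measurable g) (hg0 : ∀ y, 0 ≤ g y) (h : ℝ → ℝ) :
    ∫ y, h y ∂(volume.withDensity fun y => ENNReal.ofReal (g y)) = ∫ y, g y * h y := by
  have h1 : (fun y => ENNReal.ofReal (g y))
      = (fun y => ((g y).toNNReal : ℝ≥0∞)) := rfl
  rw [h1, integral_withDensity_eq_integral_smul hg.real_toNNReal h]
  congr 1
  funext y
  rw [NNReal.smul_def, Real.coe_toNNReal _ (hg0 y), smul_eq_mul]

lemma integral_erlM {k : ℕ} {r : ℝ} (hr : 0 < r) (h : ℝ → ℝ) :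
    ∫ y, h y ∂(erlM k r) = ∫ y, erlInd k r y * h y :=
  integral_wd _ (erlInd_measurable k r) (erlInd_nonneg hr) h


lemma erlInd_mul (k : ℕ) {r : ℝ} (hr : 0 < r) (y : ℝ) :
    erlInd k r y * y = (((k:ℝ)+1)/r) * erlInd (k+1) r y := by
  unfold erlInd
  by_cases hy : 0 < y
  · rw [if_pos hy, if_pos hy]
    unfold erlDens
    rw [pow_succ, Nat.factorial_succ]
    have hk : (k.factorial : ℝ) ≠ 0 := by positivity
    push_cast
    field_simp
  · rw [if_neg hy, if_neg hy, zero_mul, mul_zero]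

lemma erlInd_mul_sq (k : ℕ) {r : ℝ} (hr : 0 < r) (y : ℝ) :
    erlInd k r y * y^2 = (((k:ℝ)+1)*((k:ℝ)+2)/r^2) * erlInd (k+2) r y := by
  have h1 := erlInd_mul k hr y
  have h2 := erlInd_mul (k+1) hr y
  have : erlInd k r y * y^2 = (erlInd k r y * y) * y := by ring
  rw [this, h1, mul_assoc, h2]
  push_cast
  have hr' : r ≠ 0 := hr.ne'
  field_simp
  ring

lemma integrable_erlInd_mul (k : ℕ) {r : ℝ} (hr : 0 < r) :
    Integrable (fun y => erlInd k r y * y) := by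
  simp_rw [erlInd_mul k hr]
  exact (erlInd_integrable hr).const_mul _

lemma integrable_erlInd_mul_sq (k : ℕ) {r : ℝ} (hr : 0 < r) :
    Integrable (fun y => erlInd k r y * y^2) := by
  simp_rw [erlInd_mul_sq k hr]
  exact (erlInd_integrable hr).const_mul _

lemma integral_erlInd_mul (k : ℕ) {r : ℝ} (hr : 0 < r) :
    ∫ y, erlInd k r y * y = ((k:ℝ)+1)/r := by
  simp_rw [erlInd_mul k hr]
  rw [integral_const_mul, integral_erlInd hr, mul_one]

lemma integral_erlInd_mul_sq (k : ℕ) {r : ℝ} (hr : 0 < r) :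
    ∫ y, erlInd k r y * y^2 = ((k:ℝ)+1)*((k:ℝ)+2)/r^2 := by
  simp_rw [erlInd_mul_sq k hr]
  rw [integral_const_mul, integral_erlInd hr, mul_one]

lemma integrable_erlInd_centered (k : ℕ) {r : ℝ} (hr : 0 < r) (x : ℝ) :
    Integrable (fun y => erlInd k r y * (y - x)^2) := by
  have hpt : ∀ y, erlInd k r y * (y - x)^2
      = (erlInd k r y * y^2) - (2*x) * (erlInd k r y * y) + x^2 * erlInd k r y := fun y => by ring
  simp_rw [hpt]
  exact ((integrable_erlInd_mul_sq k hr).sub ((integrable_erlInd_mul k hr).const_mul _)).add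
    ((erlInd_integrable hr).const_mul _)

lemma integral_erlInd_centered (k : ℕ) {r : ℝ} (hr : 0 < r) (x : ℝ) :
    ∫ y, erlInd k r y * (y - x)^2 = (((k:ℝ)+1)/r - x)^2 + ((k:ℝ)+1)/r^2 := by
  have hpt : ∀ y, erlInd k r y * (y - x)^2
      = (erlInd k r y * y^2) - (2*x) * (erlInd k r y * y) + x^2 * erlInd k r y := fun y => by ring
  simp_rw [hpt]
  have hIa : Integrable (fun y => erlInd k r y * y^2 - 2*x*(erlInd k r y * y)) :=
    (integrable_erlInd_mul_sq k hr).sub ((integrable_erlInd_mul k hr).const_mul _)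
  have hIb : Integrable (fun y => x^2 * erlInd k r y) := (erlInd_integrable hr).const_mul _
  rw [integral_add hIa hIb,
    integral_sub (integrable_erlInd_mul_sq k hr) ((integrable_erlInd_mul k hr).const_mul _),
    integral_const_mul, integral_const_mul, integral_erlInd_mul k hr,
    integral_erlInd_mul_sq k hr, integral_erlInd hr]
  have hr' : r ≠ 0 := hr.ne'
  field_simp
  ring

lemma erlM_tail (k : ℕ) {r : ℝ} (hr : 0 < r) (x : ℝ) {δ : ℝ} (hδ : 0 < δ) :
    ((erlM k r) {y | δ ≤ |y - x|}).toReal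
      ≤ ((((k:ℝ)+1)/r - x)^2 + ((k:ℝ)+1)/r^2) / δ^2 := by
  set S := {y : ℝ | δ ≤ |y - x|} with hSdef
  have hS : MeasurableSet S :=
    measurableSet_le measurable_const ((measurable_id.sub measurable_const).abs)
  have htr : ((erlM k r) S).toReal = ∫ y in S, erlInd k r y := by
    rw [erlM, withDensity_apply _ hS,
      ← ofReal_integral_eq_lintegral_ofReal ((erlInd_integrable hr).restrict)
        (ae_restrict_of_ae (Filter.Eventually.of_forall (erlInd_nonneg hr))),
      ENNReal.toReal_ofReal (setIntegral_nonneg hS (fun y _ => erlInd_nonneg hr y))]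
  have key : δ^2 * ∫ y in S, erlInd k r y ≤ ∫ y, erlInd k r y * (y-x)^2 := by
    have hpt : ∀ y, S.indicator (fun y => δ^2 * erlInd k r y) y ≤ erlInd k r y * (y - x)^2 := by
      intro y
      by_cases hy : y ∈ S
      · rw [Set.indicator_of_mem hy]
        have h0 : δ ≤ |y - x| := hy
        have h1 : δ^2 ≤ (y-x)^2 := by
          nlinarith [abs_nonneg (y-x), sq_abs (y-x)]
        nlinarith [erlInd_nonneg (k := k) hr y]
      · rw [Set.indicator_of_notMem hy]
        exact mul_nonneg (erlInd_nonneg hr y) (sq_nonneg _)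
    have hint1 : Integrable (S.indicator fun y => δ^2 * erlInd k r y) :=
      ((erlInd_integrable hr).const_mul _).indicator hS
    have hmono := integral_mono hint1 (integrable_erlInd_centered k hr x) hpt
    rwa [integral_indicator hS, integral_const_mul] at hmono
  rw [htr, le_div_iff₀ (by positivity : (0:ℝ) < δ^2)]
  calc (∫ y in S, erlInd k r y) * δ^2 = δ^2 * ∫ y in S, erlInd k r y := by ring
  _ ≤ ∫ y, erlInd k r y * (y-x)^2 := key
  _ = (((k:ℝ)+1)/r - x)^2 + ((k:ℝ)+1)/r^2 := integral_erlInd_centered k hr x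

lemma erl_tendsto (f : BoundedContinuousFunction ℝ ℝ) {x : ℝ} (k : ℕ → ℕ) (r : ℕ → ℝ)
    (hr : ∀ n, 0 < r n)
    (hm : Tendsto (fun n => ((k n : ℝ)+1)/(r n)) atTop (𝓝 x))
    (hv : Tendsto (fun n => ((k n : ℝ)+1)/(r n)^2) atTop (𝓝 0)) :
    Tendsto (fun n => ∫ y, f y ∂(erlM (k n) (r n))) atTop (𝓝 (f x)) := by
  rw [Metric.tendsto_atTop]
  intro ε hε
  obtain ⟨δ, hδ, hfδ⟩ := Metric.continuousAt_iff.mp (f.continuous.continuousAt (x := x))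
    (ε/4) (by linarith)
  have hV : Tendsto (fun n => (((k n:ℝ)+1)/(r n) - x)^2 + ((k n:ℝ)+1)/(r n)^2) atTop (𝓝 0) := by
    have h1 : Tendsto (fun n => (((k n:ℝ)+1)/(r n) - x)^2) atTop (𝓝 0) := by
      have h2 := (hm.sub (tendsto_const_nhds (x := x))).pow 2
      simpa using h2
    simpa using h1.add hv
  have hev : ∀ᶠ n in atTop, (((k n:ℝ)+1)/(r n) - x)^2 + ((k n:ℝ)+1)/(r n)^2
      < (ε/4) * δ^2 / (2*(‖f‖+1)) :=
    hV.eventually (gt_mem_nhds (by positivity))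
  rw [Filter.eventually_atTop] at hev
  obtain ⟨N, hN⟩ := hev
  refine ⟨N, fun n hn => ?_⟩
  haveI : IsProbabilityMeasure (erlM (k n) (r n)) := erlM_prob (hr n)
  set P := erlM (k n) (r n) with hP
  set S := {y : ℝ | δ ≤ |y - x|} with hSdef
  have hS : MeasurableSet S :=
    measurableSet_le measurable_const ((measurable_id.sub measurable_const).abs)
  have hfi : Integrable (⇑f) P := f.integrable P
  have h1 : ∫ y, f y ∂P - f x = ∫ y, (f y - f x) ∂P := by
    rw [integral_sub hfi (integrable_const _), integral_const]
    simp
  have h2 : |∫ y, (f y - f x) ∂P| ≤ ∫ y, |f y - f x| ∂P := by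
    simpa [Real.norm_eq_abs] using norm_integral_le_integral_norm (μ := P) (fun y => f y - f x)
  have hgint : Integrable (fun y => ε/4 + S.indicator (fun _ => 2*‖f‖) y) P :=
    (integrable_const _).add ((integrable_const _).indicator hS)
  have h3 : ∫ y, |f y - f x| ∂P ≤ ∫ y, (ε/4 + S.indicator (fun _ => 2*‖f‖) y) ∂P := by
    refine integral_mono (hfi.sub (integrable_const _)).abs hgint (fun y => ?_)
    by_cases hy : y ∈ S
    · rw [Set.indicator_of_mem hy]
      have hy1 : |f y| ≤ ‖f‖ := by simpa [Real.norm_eq_abs] using f.norm_coe_le_norm y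
      have hy2 : |f x| ≤ ‖f‖ := by simpa [Real.norm_eq_abs] using f.norm_coe_le_norm x
      have hy3 : |f y - f x| ≤ |f y| + |f x| := abs_sub _ _
      linarith
    · rw [Set.indicator_of_notMem hy]
      have hyx : dist y x < δ := by
        rw [Real.dist_eq]
        simpa [hSdef] using hy
      have := hfδ hyx
      rw [Real.dist_eq] at this
      linarith
  have h4 : ∫ y, (ε/4 + S.indicator (fun _ => 2*‖f‖) y) ∂P
      = ε/4 + (P S).toReal * (2*‖f‖) := by
    rw [integral_add (integrable_const _) ((integrable_const _).indicator hS), integral_const,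
      integral_indicator_const _ hS]
    simp [smul_eq_mul, Measure.real]
  have h5 : (P S).toReal ≤ ((((k n:ℝ)+1)/(r n) - x)^2 + ((k n:ℝ)+1)/(r n)^2) / δ^2 :=
    erlM_tail (k n) (hr n) x hδ
  have h6 := hN n hn
  have h7 : (P S).toReal * (2*‖f‖) ≤ ε/4 := by
    have hfn : 0 ≤ ‖f‖ := norm_nonneg f
    have h8 : (P S).toReal < (ε/4) / (2*(‖f‖+1)) := by
      have h81 : ((((k n:ℝ)+1)/(r n) - x)^2 + ((k n:ℝ)+1)/(r n)^2) / δ^2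
          < ((ε/4) * δ^2 / (2*(‖f‖+1))) / δ^2 := by gcongr
      have h82 : ((ε/4) * δ^2 / (2*(‖f‖+1))) / δ^2 = (ε/4) / (2*(‖f‖+1)) := by
        field_simp
      linarith
    have h9 : 0 ≤ (P S).toReal := ENNReal.toReal_nonneg
    rw [lt_div_iff₀ (by positivity)] at h8
    nlinarith
  rw [Real.dist_eq]
  calc |∫ y, f y ∂P - f x| = |∫ y, (f y - f x) ∂P| := by rw [h1]
  _ ≤ ∫ y, |f y - f x| ∂P := h2
  _ ≤ ε/4 + (P S).toReal * (2*‖f‖) := by rw [← h4]; exact h3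
  _ ≤ ε/4 + ε/4 := by linarith
  _ < ε := by linarith


/-- mixture density -/
def mixInd (M : ℕ) (r : ℝ) (piv : Fin (M+1) → ℝ) : ℝ → ℝ :=
  fun y => ∑ i, piv i * erlInd (M - (i:ℕ)) r y

lemma mixInd_measurable (M : ℕ) (r : ℝ) (piv : Fin (M+1) → ℝ) :
    Measurable (mixInd M r piv) :=
  Finset.measurable_sum _ (fun i _ => (erlInd_measurable _ r).const_mul _)

lemma mixInd_nonneg (M : ℕ) {r : ℝ} (hr : 0 < r) {piv : Fin (M+1) → ℝ}
    (h0 : ∀ i, 0 ≤ piv i) (y : ℝ) : 0 ≤ mixInd M r piv y :=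
  Finset.sum_nonneg fun i _ => mul_nonneg (h0 i) (erlInd_nonneg hr y)

lemma mixInd_integrable (M : ℕ) {r : ℝ} (hr : 0 < r) (piv : Fin (M+1) → ℝ) :
    Integrable (mixInd M r piv) :=
  integrable_finset_sum _ (fun i _ => (erlInd_integrable hr).const_mul _)

lemma phMeasure_matT (M : ℕ) {r : ℝ} (hr : 0 < r) (piv : Fin (M+1) → ℝ) :
    phMeasure piv (matT M r)
      = volume.withDensity fun y => ENNReal.ofReal (mixInd M r piv y) := by
  unfold phMeasure
  congr 1
  funext y
  by_cases hy : 0 < y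
  · rw [if_pos hy]
    congr 1
    rw [phDens_matT]
    unfold mixInd erlInd
    exact Finset.sum_congr rfl fun i _ => by rw [if_pos hy]
  · rw [if_neg hy]
    unfold mixInd erlInd
    simp only [if_neg hy, mul_zero, Finset.sum_const_zero, ENNReal.ofReal_zero]

lemma integrable_erlInd_mul_bcf {k : ℕ} {r : ℝ} (hr : 0 < r) (f : BoundedContinuousFunction ℝ ℝ) :
    Integrable (fun y => erlInd k r y * f y) := by
  have h := (erlInd_integrable (k := k) hr).bdd_mul
    f.continuous.measurable.aestronglyMeasurable (Filter.Eventually.of_forall fun y => f.norm_coe_le_norm y)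
  have hpt : ∀ y, erlInd k r y * f y = f y * erlInd k r y := fun y => mul_comm _ _
  simp_rw [hpt]
  exact h

lemma integral_phMeasure (M : ℕ) {r : ℝ} (hr : 0 < r) {piv : Fin (M+1) → ℝ}
    (h0 : ∀ i, 0 ≤ piv i) (f : BoundedContinuousFunction ℝ ℝ) :
    ∫ y, f y ∂(phMeasure piv (matT M r))
      = ∑ i, piv i * ∫ y, f y ∂(erlM (M - (i:ℕ)) r) := by
  rw [phMeasure_matT M hr piv,
    integral_wd _ (mixInd_measurable M r piv) (mixInd_nonneg M hr h0) f]
  have hpt : ∀ y, mixInd M r piv y * f y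
      = ∑ i, piv i * (erlInd (M - (i:ℕ)) r y * f y) := by
    intro y
    rw [mixInd, Finset.sum_mul]
    exact Finset.sum_congr rfl fun i _ => by ring
  simp_rw [hpt]
  rw [integral_finset_sum _ (fun i _ => ((integrable_erlInd_mul_bcf hr f).const_mul _))]
  exact Finset.sum_congr rfl fun i _ => by
    rw [integral_const_mul, integral_erlM hr]

lemma phMeasure_matT_prob (M : ℕ) {r : ℝ} (hr : 0 < r) {piv : Fin (M+1) → ℝ}
    (h0 : ∀ i, 0 ≤ piv i) (h1 : ∑ i, piv i = 1) :
    IsProbabilityMeasure (phMeasure piv (matT M r)) := by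
  constructor
  rw [phMeasure_matT M hr piv, withDensity_apply _ MeasurableSet.univ, setLIntegral_univ,
    ← ofReal_integral_eq_lintegral_ofReal (mixInd_integrable M hr piv)
      (Filter.Eventually.of_forall (mixInd_nonneg M hr h0))]
  have hint : ∫ y, mixInd M r piv y = 1 := by
    unfold mixInd
    rw [integral_finset_sum _ (fun i _ => (erlInd_integrable hr).const_mul _)]
    have : ∀ i : Fin (M+1), ∫ y, piv i * erlInd (M - (i:ℕ)) r y = piv i :=
      fun i => by rw [integral_const_mul, integral_erlInd hr, mul_one]
    rw [Finset.sum_congr rfl (fun i _ => this i), h1]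
  rw [hint]
  exact ENNReal.ofReal_one


/-- grid shape function -/
def sfn (n : ℕ) (x : ℝ) : ℕ := min (max (Nat.ceil (((n:ℝ)+1) * x)) 1) ((n+1)^2+1)

lemma sfn_measurable (n : ℕ) : Measurable (sfn n) := by
  unfold sfn
  exact ((Nat.measurable_ceil.comp (measurable_id.const_mul _)).max measurable_const).min
    measurable_const

lemma sfn_ge_one (n : ℕ) (x : ℝ) : 1 ≤ sfn n x := by
  unfold sfn
  have h1 : 1 ≤ max (Nat.ceil (((n:ℝ)+1) * x)) 1 := le_max_right _ _
  have h2 : 1 ≤ (n+1)^2+1 := Nat.succ_le_succ (Nat.zero_le _)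
  omega

lemma sfn_le (n : ℕ) (x : ℝ) : sfn n x ≤ (n+1)^2+1 := min_le_right _ _

/-- grid weights -/
def wgt (μ' : Measure ℝ) (n : ℕ) : Fin ((n+1)^2+1) → ℝ :=
  fun i => (μ' {x | sfn n x = (n+1)^2 + 1 - (i:ℕ)}).toReal

lemma wgt_nonneg (μ' : Measure ℝ) (n : ℕ) (i : Fin ((n+1)^2+1)) : 0 ≤ wgt μ' n i :=
  ENNReal.toReal_nonneg

lemma wgt_set_measurable (n : ℕ) (j : ℕ) : MeasurableSet {x : ℝ | sfn n x = j} :=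
  sfn_measurable n (measurableSet_singleton j)

lemma wgt_sum (μ' : Measure ℝ) [IsProbabilityMeasure μ'] (n : ℕ) :
    ∑ i, wgt μ' n i = 1 := by
  classical
  set m := (n+1)^2 with hm
  set A : Fin (m+1) → Set ℝ := fun i => {x | sfn n x = m + 1 - (i:ℕ)} with hA
  have hmeas : ∀ i, MeasurableSet (A i) := fun i => wgt_set_measurable n _
  have hdisj : Pairwise (Function.onFun Disjoint A) := by
    intro i j hij
    refine Set.disjoint_left.mpr fun x hxi hxj => ?_
    have h1 : sfn n x = m + 1 - (i:ℕ) := hxi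
    have h2 : sfn n x = m + 1 - (j:ℕ) := hxj
    have hi := i.isLt
    have hj := j.isLt
    exact hij (Fin.ext (by omega))
  have hcover : (⋃ i, A i) = Set.univ := by
    ext x
    simp only [Set.mem_iUnion, Set.mem_univ, iff_true]
    have h1 := sfn_ge_one n x
    have h2 := sfn_le n x
    refine ⟨⟨m + 1 - sfn n x, by omega⟩, ?_⟩
    show sfn n x = m + 1 - (m + 1 - sfn n x)
    omega
  have hsum : ∑ i, μ' (A i) = 1 := by
    rw [← tsum_fintype (L := SummationFilter.unconditional _), ← measure_iUnion hdisj hmeas, hcover, measure_univ]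
  have : ∑ i, wgt μ' n i = (∑ i, μ' (A i)).toReal := by
    rw [ENNReal.toReal_sum (fun i _ => measure_ne_top μ' _)]
    rfl
  rw [this, hsum, ENNReal.toReal_one]

lemma lemA (μ' : Measure ℝ) [IsProbabilityMeasure μ'] (hμ' : μ' (Set.Iic 0) = 0)
    (f : BoundedContinuousFunction ℝ ℝ) :
    Tendsto (fun n => ∫ y, f y ∂(phMeasure (wgt μ' n) (matT ((n+1)^2) ((n:ℝ)+1))))
      atTop (𝓝 (∫ x, f x ∂μ')) := by
  classical
  have hrn : ∀ n : ℕ, (0:ℝ) < (n:ℝ)+1 := fun n => by positivity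
  set G : ℕ → ℝ → ℝ := fun n x => ∫ y, f y ∂(erlM (sfn n x - 1) ((n:ℝ)+1)) with hG
  have key : ∀ n, ∫ y, f y ∂(phMeasure (wgt μ' n) (matT ((n+1)^2) ((n:ℝ)+1)))
      = ∫ x, G n x ∂μ' := by
    intro n
    rw [integral_phMeasure _ (hrn n) (wgt_nonneg μ' n) f]
    set m := (n+1)^2 with hm
    have hGpt : ∀ x, G n x = ∑ i : Fin (m+1),
        Set.indicator {x | sfn n x = m+1-(i:ℕ)}
          (fun _ => ∫ y, f y ∂(erlM (m - (i:ℕ)) ((n:ℝ)+1))) x := by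
      intro x
      have h1 := sfn_ge_one n x
      have h2 := sfn_le n x
      have hi0lt : m + 1 - sfn n x < m + 1 := by omega
      rw [Finset.sum_eq_single (⟨m + 1 - sfn n x, hi0lt⟩ : Fin (m+1))]
      · rw [Set.indicator_of_mem (by show sfn n x = m + 1 - (m + 1 - sfn n x); omega)]
        have : m - (m + 1 - sfn n x) = sfn n x - 1 := by omega
        rw [this]
      · intro i _ hi
        refine Set.indicator_of_notMem ?_ _
        intro hx
        have hx' : sfn n x = m + 1 - (i:ℕ) := hx
        have hilt := i.isLt
        apply hi
        apply Fin.ext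
        show (i:ℕ) = m + 1 - sfn n x
        omega
      · intro hmem; exact absurd (Finset.mem_univ _) hmem
    have hint : ∀ i : Fin (m+1), Integrable
        (Set.indicator {x | sfn n x = m+1-(i:ℕ)}
          (fun _ => ∫ y, f y ∂(erlM (m - (i:ℕ)) ((n:ℝ)+1)))) μ' :=
      fun i => (integrable_const _).indicator (wgt_set_measurable n _)
    calc ∑ i : Fin (m+1), wgt μ' n i * ∫ y, f y ∂(erlM (m - (i:ℕ)) ((n:ℝ)+1))
        = ∑ i : Fin (m+1), ∫ x, Set.indicator {x | sfn n x = m+1-(i:ℕ)}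
            (fun _ => ∫ y, f y ∂(erlM (m - (i:ℕ)) ((n:ℝ)+1))) x ∂μ' := by
          refine Finset.sum_congr rfl fun i _ => ?_
          rw [integral_indicator_const _ (wgt_set_measurable n _)]
          rw [wgt]
          simp [smul_eq_mul, Measure.real, hm]
    _ = ∫ x, ∑ i : Fin (m+1), Set.indicator {x | sfn n x = m+1-(i:ℕ)}
            (fun _ => ∫ y, f y ∂(erlM (m - (i:ℕ)) ((n:ℝ)+1))) x ∂μ' := by
          rw [integral_finset_sum _ (fun i _ => hint i)]
    _ = ∫ x, G n x ∂μ' := by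
          refine integral_congr_ae (Filter.Eventually.of_forall fun x => ?_)
          rw [hGpt x]
  rw [show (fun n => ∫ y, f y ∂(phMeasure (wgt μ' n) (matT ((n+1)^2) ((n:ℝ)+1))))
      = fun n => ∫ x, G n x ∂μ' from funext key]
  -- dominated convergence
  have hGmeas : ∀ n, AEStronglyMeasurable (G n) μ' := by
    intro n
    have : G n = (fun j : ℕ => ∫ y, f y ∂(erlM (j - 1) ((n:ℝ)+1))) ∘ (sfn n) := rfl
    rw [this]
    exact (measurable_from_top.comp (sfn_measurable n)).aestronglyMeasurable
  have hGbdd : ∀ n, ∀ᵐ x ∂μ', ‖G n x‖ ≤ ‖f‖ := by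
    intro n
    refine Filter.Eventually.of_forall fun x => ?_
    haveI : IsProbabilityMeasure (erlM (sfn n x - 1) ((n:ℝ)+1)) := erlM_prob (hrn n)
    calc ‖G n x‖ ≤ ∫ y, ‖f y‖ ∂(erlM (sfn n x - 1) ((n:ℝ)+1)) :=
          norm_integral_le_integral_norm _
    _ ≤ ∫ _, ‖f‖ ∂(erlM (sfn n x - 1) ((n:ℝ)+1)) :=
          integral_mono (f.integrable _).norm (integrable_const _)
            (fun y => f.norm_coe_le_norm y)
    _ = ‖f‖ := by simp
  have hae : ∀ᵐ x ∂μ', 0 < x := by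
    refine ae_iff.mpr ?_
    have : {x : ℝ | ¬ 0 < x} = Set.Iic 0 := by ext x; simp
    rw [this]
    exact hμ'
  have hconv : ∀ᵐ x ∂μ', Tendsto (fun n => G n x) atTop (𝓝 (f x)) := by
    filter_upwards [hae] with x hx
    have hcast : ∀ n, ((sfn n x - 1 : ℕ) : ℝ) + 1 = (sfn n x : ℝ) := by
      intro n
      have := sfn_ge_one n x
      push_cast [Nat.cast_sub this]
      ring
    have hev : ∀ᶠ n : ℕ in atTop, x ≤ (n:ℝ)+1 := by
      have := tendsto_natCast_atTop_atTop (R := ℝ)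
      filter_upwards [this.eventually_ge_atTop x] with n hn
      linarith
    have hsfn_eq : ∀ᶠ n : ℕ in atTop, ((n:ℝ)+1) * x ≤ (sfn n x : ℝ)
        ∧ (sfn n x : ℝ) < ((n:ℝ)+1) * x + 1 := by
      filter_upwards [hev] with n hn
      have hx0 : 0 ≤ ((n:ℝ)+1) * x := by positivity
      have hc1 : 1 ≤ Nat.ceil (((n:ℝ)+1) * x) := by
        rw [Nat.one_le_ceil_iff]
        positivity
      have hc2 : Nat.ceil (((n:ℝ)+1) * x) ≤ (n+1)^2+1 := by
        rw [Nat.ceil_le]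
        push_cast
        nlinarith
      have heq : sfn n x = Nat.ceil (((n:ℝ)+1) * x) := by
        unfold sfn
        rw [max_eq_left hc1, min_eq_left hc2]
      rw [heq]
      exact ⟨Nat.le_ceil _, Nat.ceil_lt_add_one hx0⟩
    have hm : Tendsto (fun n => ((sfn n x - 1 : ℕ) : ℝ) + 1) atTop (𝓝 x) →
        True := fun _ => trivial
    apply erl_tendsto f _ _ hrn
    · -- mean convergence
      simp_rw [hcast]
      have hup : Tendsto (fun n : ℕ => x + 1/((n:ℝ)+1)) atTop (𝓝 x) := by
        have := tendsto_one_div_add_atTop_nhds_zero_nat (𝕜 := ℝ)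
        simpa using (tendsto_const_nhds (x := x)).add this
      refine tendsto_of_tendsto_of_tendsto_of_le_of_le' tendsto_const_nhds hup ?_ ?_
      · filter_upwards [hsfn_eq] with n hn
        rw [le_div_iff₀ (hrn n)]
        linarith [hn.1]
      · filter_upwards [hsfn_eq] with n hn
        rw [div_le_iff₀ (hrn n)]
        have h1 : (sfn n x : ℝ) ≤ ((n:ℝ)+1)*x + 1 := le_of_lt hn.2
        calc (sfn n x : ℝ) ≤ ((n:ℝ)+1)*x + 1 := h1
        _ = (x + 1/((n:ℝ)+1)) * ((n:ℝ)+1) := by field_simp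
    · -- variance convergence
      simp_rw [hcast]
      have hup : Tendsto (fun n : ℕ => (x+1) * (1/((n:ℝ)+1))) atTop (𝓝 0) := by
        have := tendsto_one_div_add_atTop_nhds_zero_nat (𝕜 := ℝ)
        simpa using (tendsto_const_nhds (x := x+1)).mul this
      refine tendsto_of_tendsto_of_tendsto_of_le_of_le' tendsto_const_nhds hup ?_ ?_
      · filter_upwards with n
        have h0 : (0:ℝ) ≤ (sfn n x : ℝ) := Nat.cast_nonneg _
        positivity
      · filter_upwards [hsfn_eq, hev] with n hn hxn
        rw [div_le_iff₀ (by positivity : (0:ℝ) < ((n:ℝ)+1)^2)]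
        have h1 : (sfn n x : ℝ) ≤ ((n:ℝ)+1)*x + 1 := le_of_lt hn.2
        have h2 : ((n:ℝ)+1)*x + 1 ≤ ((n:ℝ)+1)*(x+1) := by nlinarith [hrn n]
        calc (sfn n x : ℝ) ≤ ((n:ℝ)+1)*(x+1) := le_trans h1 h2
        _ = (x+1) * (1/((n:ℝ)+1)) * ((n:ℝ)+1)^2 := by field_simp
  exact tendsto_integral_of_dominated_convergence _ hGmeas (integrable_const ‖f‖) hGbdd hconv


lemma norm_integral_bcf_le (P : Measure ℝ) [IsProbabilityMeasure P]
    (f : BoundedContinuousFunction ℝ ℝ) (g : ℝ → ℝ) (hg : AEStronglyMeasurable g P)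
    (hb : ∀ y, ‖g y‖ ≤ ‖f‖) : ‖∫ y, g y ∂P‖ ≤ ‖f‖ := by
  calc ‖∫ y, g y ∂P‖ ≤ ∫ y, ‖g y‖ ∂P := norm_integral_le_integral_norm _
  _ ≤ ∫ _, ‖f‖ ∂P := by
      refine integral_mono ?_ (integrable_const _) hb
      refine Integrable.mono' (integrable_const ‖f‖) hg.norm ?_
      refine Filter.Eventually.of_forall fun y => ?_
      rw [norm_norm]
      exact hb y
  _ = ‖f‖ := by simp

lemma lemB (P : Measure ℝ) [IsProbabilityMeasure P] {c : ℝ} (hc : 0 < c)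
    (ν₀ : ℕ → Measure ℝ) (hν₀p : ∀ m, IsProbabilityMeasure (ν₀ m))
    (hdeg : ∀ f : BoundedContinuousFunction ℝ ℝ,
      Tendsto (fun m => ∫ x, f x ∂(ν₀ m)) atTop (𝓝 (f c)))
    (f : BoundedContinuousFunction ℝ ℝ) :
    Tendsto (fun m => ∫ q : ℝ × ℝ, f (q.1 / q.2) ∂(P.prod (ν₀ m))) atTop
      (𝓝 (∫ y, f (y / c) ∂P)) := by
  have hc2 : (0:ℝ) < c/2 := by linarith
  have hmaxpos : ∀ θ : ℝ, (0:ℝ) < max θ (c/2) := fun θ => lt_of_lt_of_le hc2 (le_max_right _ _)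
  set H : ℝ → ℝ := fun θ => ∫ y, f (y / max θ (c/2)) ∂P with hH
  have hHcont : Continuous H := by
    rw [continuous_iff_continuousAt]
    intro θ₀
    refine continuousAt_of_dominated ?_ ?_ (integrable_const ‖f‖) ?_
    · refine Filter.Eventually.of_forall fun θ => ?_
      exact (f.continuous.comp (continuous_id.div_const _)).aestronglyMeasurable
    · refine Filter.Eventually.of_forall fun θ => ?_
      exact Filter.Eventually.of_forall fun y => f.norm_coe_le_norm _
    · refine Filter.Eventually.of_forall fun y => ?_
      have : Continuous fun θ : ℝ => f (y / max θ (c/2)) := by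
        apply f.continuous.comp
        exact continuous_const.div (continuous_id.max continuous_const)
          (fun θ => (hmaxpos θ).ne')
      exact this.continuousAt
  have hHbd : ∀ θ, ‖H θ‖ ≤ ‖f‖ := fun θ =>
    norm_integral_bcf_le P f _ (f.continuous.comp (continuous_id.div_const _)).aestronglyMeasurable
      (fun y => f.norm_coe_le_norm _)
  set Hb : BoundedContinuousFunction ℝ ℝ :=
    BoundedContinuousFunction.ofNormedAddCommGroup H hHcont ‖f‖ hHbd with hHb
  have hHc : H c = ∫ y, f (y / c) ∂P := by
    rw [hH]
    simp only [max_eq_left (by linarith : c/2 ≤ c)]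
  have h1 : Tendsto (fun m => ∫ θ, H θ ∂(ν₀ m)) atTop (𝓝 (H c)) := hdeg Hb
  -- Fubini step
  have hFub : ∀ m, ∫ q : ℝ × ℝ, f (q.1 / max q.2 (c/2)) ∂(P.prod (ν₀ m))
      = ∫ θ, H θ ∂(ν₀ m) := by
    intro m
    haveI := hν₀p m
    have hmeas : AEStronglyMeasurable (fun q : ℝ × ℝ => f (q.1 / max q.2 (c/2)))
        (P.prod (ν₀ m)) :=
      (f.continuous.measurable.comp
        (measurable_fst.div (measurable_snd.max measurable_const))).aestronglyMeasurable
    have hint : Integrable (fun q : ℝ × ℝ => f (q.1 / max q.2 (c/2))) (P.prod (ν₀ m)) :=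
      Integrable.mono' (integrable_const ‖f‖) hmeas
        (Filter.Eventually.of_forall fun q => f.norm_coe_le_norm _)
    exact integral_prod_symm _ hint
  -- error bound
  have herr : ∀ m, |(∫ q : ℝ × ℝ, f (q.1 / q.2) ∂(P.prod (ν₀ m)))
      - ∫ q : ℝ × ℝ, f (q.1 / max q.2 (c/2)) ∂(P.prod (ν₀ m))|
      ≤ 2 * ‖f‖ * ((ν₀ m) (Set.Iio (c/2))).toReal := by
    intro m
    haveI := hν₀p m
    have hmeas1 : AEStronglyMeasurable (fun q : ℝ × ℝ => f (q.1 / q.2)) (P.prod (ν₀ m)) :=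
      (f.continuous.measurable.comp (measurable_fst.div measurable_snd)).aestronglyMeasurable
    have hint1 : Integrable (fun q : ℝ × ℝ => f (q.1 / q.2)) (P.prod (ν₀ m)) :=
      Integrable.mono' (integrable_const ‖f‖) hmeas1
        (Filter.Eventually.of_forall fun q => f.norm_coe_le_norm _)
    have hmeas2 : AEStronglyMeasurable (fun q : ℝ × ℝ => f (q.1 / max q.2 (c/2)))
        (P.prod (ν₀ m)) :=
      (f.continuous.measurable.comp
        (measurable_fst.div (measurable_snd.max measurable_const))).aestronglyMeasurable
    have hint2 : Integrable (fun q : ℝ × ℝ => f (q.1 / max q.2 (c/2))) (P.prod (ν₀ m)) :=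
      Integrable.mono' (integrable_const ‖f‖) hmeas2
        (Filter.Eventually.of_forall fun q => f.norm_coe_le_norm _)
    set S : Set (ℝ × ℝ) := Set.univ ×ˢ Set.Iio (c/2) with hSdef
    have hS : MeasurableSet S := MeasurableSet.univ.prod measurableSet_Iio
    have hptw : ∀ q : ℝ × ℝ, |f (q.1 / q.2) - f (q.1 / max q.2 (c/2))|
        ≤ S.indicator (fun _ => 2 * ‖f‖) q := by
      intro q
      by_cases hq : q ∈ S
      · rw [Set.indicator_of_mem hq]
        have h1 : |f (q.1/q.2)| ≤ ‖f‖ := by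
          simpa [Real.norm_eq_abs] using f.norm_coe_le_norm (q.1/q.2)
        have h2 : |f (q.1 / max q.2 (c/2))| ≤ ‖f‖ := by
          simpa [Real.norm_eq_abs] using f.norm_coe_le_norm (q.1 / max q.2 (c/2))
        have h3 := abs_sub (f (q.1/q.2)) (f (q.1 / max q.2 (c/2)))
        linarith
      · rw [Set.indicator_of_notMem hq]
        have hq2 : c/2 ≤ q.2 := by
          by_contra hlt
          exact hq ⟨Set.mem_univ _, by simpa using lt_of_not_ge hlt⟩
        rw [max_eq_left hq2, sub_self, abs_zero]
    calc |(∫ q : ℝ × ℝ, f (q.1 / q.2) ∂(P.prod (ν₀ m)))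
        - ∫ q : ℝ × ℝ, f (q.1 / max q.2 (c/2)) ∂(P.prod (ν₀ m))|
        = |∫ q : ℝ × ℝ, (f (q.1 / q.2) - f (q.1 / max q.2 (c/2))) ∂(P.prod (ν₀ m))| := by
          rw [integral_sub hint1 hint2]
    _ ≤ ∫ q : ℝ × ℝ, |f (q.1 / q.2) - f (q.1 / max q.2 (c/2))| ∂(P.prod (ν₀ m)) := by
          simpa [Real.norm_eq_abs] using
            norm_integral_le_integral_norm (μ := P.prod (ν₀ m))
              (fun q : ℝ × ℝ => f (q.1 / q.2) - f (q.1 / max q.2 (c/2)))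
    _ ≤ ∫ q : ℝ × ℝ, S.indicator (fun _ => 2 * ‖f‖) q ∂(P.prod (ν₀ m)) := by
          exact integral_mono (hint1.sub hint2).abs ((integrable_const _).indicator hS) hptw
    _ = 2 * ‖f‖ * ((ν₀ m) (Set.Iio (c/2))).toReal := by
          rw [integral_indicator_const _ hS, hSdef, measureReal_def, Measure.prod_prod, measure_univ, one_mul,
            smul_eq_mul]
          ring
  -- tail of ν₀ m near c/2 tends to 0
  have htail : Tendsto (fun m => ((ν₀ m) (Set.Iio (c/2))).toReal) atTop (𝓝 0) := by
    have hχcont : Continuous (fun θ : ℝ => max 0 (min 1 (3 - 4*θ/c))) := by fun_prop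
    have hχbd : ∀ θ : ℝ, ‖max 0 (min 1 (3 - 4*θ/c))‖ ≤ 1 := by
      intro θ
      rw [Real.norm_eq_abs, abs_le]
      constructor
      · have := le_max_left (0:ℝ) (min 1 (3 - 4*θ/c)); linarith
      · apply max_le (by norm_num)
        exact (min_le_left _ _)
    set χ : BoundedContinuousFunction ℝ ℝ :=
      BoundedContinuousFunction.ofNormedAddCommGroup _ hχcont 1 hχbd with hχ
    have hχc : χ c = 0 := by
      show max 0 (min 1 (3 - 4*c/c)) = 0
      rw [show (3 : ℝ) - 4*c/c = -1 by field_simp; ring]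
      norm_num
    have hχ1 : ∀ θ : ℝ, θ < c/2 → (1:ℝ) ≤ χ θ := by
      intro θ hθ
      show (1:ℝ) ≤ max 0 (min 1 (3 - 4*θ/c))
      have h4 : 4*θ/c < 2 := by
        rw [div_lt_iff₀ hc]
        linarith
      have : (1:ℝ) ≤ min 1 (3 - 4*θ/c) := le_min le_rfl (by linarith)
      exact le_trans this (le_max_right _ _)
    have hχ0 : ∀ θ : ℝ, 0 ≤ χ θ := fun θ => le_max_left _ _
    have hχconv : Tendsto (fun m => ∫ θ, χ θ ∂(ν₀ m)) atTop (𝓝 0) := by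
      have := hdeg χ
      rwa [hχc] at this
    refine squeeze_zero (fun m => ENNReal.toReal_nonneg) (fun m => ?_) hχconv
    haveI := hν₀p m
    calc ((ν₀ m) (Set.Iio (c/2))).toReal
        = ∫ θ, (Set.Iio (c/2)).indicator (fun _ => (1:ℝ)) θ ∂(ν₀ m) := by
          rw [integral_indicator_const _ measurableSet_Iio, smul_eq_mul, mul_one, measureReal_def]
    _ ≤ ∫ θ, χ θ ∂(ν₀ m) := by
          refine integral_mono ((integrable_const _).indicator measurableSet_Iio)
            (χ.integrable _) (fun θ => ?_)
          by_cases hθ : θ ∈ Set.Iio (c/2)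
          · rw [Set.indicator_of_mem hθ]
            exact hχ1 θ hθ
          · rw [Set.indicator_of_notMem hθ]
            exact hχ0 θ
  -- combine
  rw [← hHc]
  rw [tendsto_iff_dist_tendsto_zero]
  have hup : Tendsto (fun m => 2 * ‖f‖ * ((ν₀ m) (Set.Iio (c/2))).toReal
      + dist (∫ θ, H θ ∂(ν₀ m)) (H c)) atTop (𝓝 0) := by
    have ha := htail.const_mul (2 * ‖f‖)
    have hb := tendsto_iff_dist_tendsto_zero.mp h1
    simpa using ha.add hb
  refine squeeze_zero (fun m => dist_nonneg) (fun m => ?_) hup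
  calc dist (∫ q : ℝ × ℝ, f (q.1 / q.2) ∂(P.prod (ν₀ m))) (H c)
      ≤ dist (∫ q : ℝ × ℝ, f (q.1 / q.2) ∂(P.prod (ν₀ m)))
          (∫ q : ℝ × ℝ, f (q.1 / max q.2 (c/2)) ∂(P.prod (ν₀ m)))
        + dist (∫ q : ℝ × ℝ, f (q.1 / max q.2 (c/2)) ∂(P.prod (ν₀ m))) (H c) :=
        dist_triangle _ _ _
  _ ≤ 2 * ‖f‖ * ((ν₀ m) (Set.Iio (c/2))).toReal + dist (∫ θ, H θ ∂(ν₀ m)) (H c) := by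
        rw [← hFub m]
        gcongr
        rw [Real.dist_eq]
        exact herr m

end CPHAux

open CPHAux

/-- if a family `C` of probability measures on `(0,∞)` contains a sequence
converging weakly to a Dirac mass at some `c > 0`, then the continuous scaled phase-type
laws built from `C` are weakly dense among probability measures on `(0,∞)`. -/
theorem cph_dense
    (C : Set (Measure ℝ))
    (hC : ∀ μ ∈ C, IsProbabilityMeasure μ ∧ μ (Set.Iic 0) = 0)
    (c : ℝ) (hc : 0 < c)
    (ν₀ : ℕ → Measure ℝ) (hν₀ : ∀ n, ν₀ n ∈ C)
    (hdeg : ∀ f : BoundedContinuousFunction ℝ ℝ,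
      Tendsto (fun n => ∫ x, f x ∂(ν₀ n)) atTop (𝓝 (f c)))
    (μ : Measure ℝ) [IsProbabilityMeasure μ] (hμ : μ (Set.Iic 0) = 0) :
    ∃ (d : ℕ → ℕ) (piv : ∀ n, Fin (d n) → ℝ)
      (T : ∀ n, Matrix (Fin (d n)) (Fin (d n)) ℝ) (ν : ℕ → Measure ℝ),
      (∀ n, ν n ∈ C) ∧ (∀ n, IsPHRepr (piv n) (T n)) ∧
      ∀ f : BoundedContinuousFunction ℝ ℝ,
        Tendsto
          (fun n => ∫ q : ℝ × ℝ, f (q.1 / q.2) ∂((phMeasure (piv n) (T n)).prod (ν n)))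
          atTop (𝓝 (∫ x, f x ∂μ)) := by
  classical
  have hν₀p : ∀ m, IsProbabilityMeasure (ν₀ m) := fun m => (hC _ (hν₀ m)).1
  set μ' : Measure ℝ := μ.map (fun x => c * x) with hμ'def
  haveI hμ'p : IsProbabilityMeasure μ' :=
    Measure.isProbabilityMeasure_map (measurable_const_mul c).aemeasurable
  have hμ'0 : μ' (Set.Iic 0) = 0 := by
    rw [hμ'def, Measure.map_apply (measurable_const_mul c) measurableSet_Iic]
    have hpre : (fun x => c * x) ⁻¹' (Set.Iic 0) = Set.Iic 0 := by
      ext x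
      simp only [Set.mem_preimage, Set.mem_Iic]
      constructor
      · intro h; nlinarith
      · intro h; nlinarith
    rw [hpre, hμ]
  have hrn : ∀ n : ℕ, (0:ℝ) < (n:ℝ)+1 := fun n => by positivity
  set PH : ℕ → Measure ℝ := fun n => phMeasure (wgt μ' n) (matT ((n+1)^2) ((n:ℝ)+1)) with hPHdef
  have hPH : ∀ n, IsProbabilityMeasure (PH n) := fun n =>
    phMeasure_matT_prob _ (hrn n) (wgt_nonneg μ' n) (wgt_sum μ' n)
  set Km : ℕ → ℕ → Measure ℝ := fun n m =>
    Measure.map (fun q : ℝ × ℝ => q.1/q.2) ((PH n).prod (ν₀ m)) with hKm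
  have hKmp : ∀ n m, IsProbabilityMeasure (Km n m) := fun n m => by
    haveI := hPH n; haveI := hν₀p m
    exact Measure.isProbabilityMeasure_map (measurable_fst.div measurable_snd).aemeasurable
  set K : ℕ → ℕ → ProbabilityMeasure ℝ := fun n m => ⟨Km n m, hKmp n m⟩ with hK
  set Qm : ℕ → Measure ℝ := fun n => Measure.map (fun y => y / c) (PH n) with hQm
  have hQmp : ∀ n, IsProbabilityMeasure (Qm n) := fun n => by
    haveI := hPH n
    exact Measure.isProbabilityMeasure_map (measurable_id.div_const c).aemeasurable
  set Q : ℕ → ProbabilityMeasure ℝ := fun n => ⟨Qm n, hQmp n⟩ with hQ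
  set μP : ProbabilityMeasure ℝ := ⟨μ, inferInstance⟩ with hμP
  have hKint : ∀ n m (f : BoundedContinuousFunction ℝ ℝ),
      ∫ x, f x ∂(Km n m) = ∫ q : ℝ × ℝ, f (q.1/q.2) ∂((PH n).prod (ν₀ m)) := fun n m f =>
    integral_map (measurable_fst.div measurable_snd).aemeasurable
      f.continuous.measurable.aestronglyMeasurable
  have hQint : ∀ n (f : BoundedContinuousFunction ℝ ℝ),
      ∫ x, f x ∂(Qm n) = ∫ y, f (y/c) ∂(PH n) := fun n f =>
    integral_map (measurable_id.div_const c).aemeasurable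
      f.continuous.measurable.aestronglyMeasurable
  have hB : ∀ n, Tendsto (fun m => K n m) atTop (𝓝 (Q n)) := by
    intro n
    haveI := hPH n
    rw [ProbabilityMeasure.tendsto_iff_forall_integral_tendsto]
    intro f
    have h1 := lemB (PH n) hc ν₀ hν₀p hdeg f
    show Tendsto (fun m => ∫ x, f x ∂(Km n m)) atTop (𝓝 (∫ x, f x ∂(Qm n)))
    rw [show (fun m => ∫ x, f x ∂(Km n m))
        = fun m => ∫ q : ℝ × ℝ, f (q.1/q.2) ∂((PH n).prod (ν₀ m)) from
      funext fun m => hKint n m f, hQint n f]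
    exact h1
  have hA : Tendsto Q atTop (𝓝 μP) := by
    rw [ProbabilityMeasure.tendsto_iff_forall_integral_tendsto]
    intro f
    set g : BoundedContinuousFunction ℝ ℝ :=
      f.compContinuous ⟨fun y => y / c, continuous_id.div_const c⟩ with hg
    have h2 := lemA μ' hμ'0 g
    have h3 : ∫ x, g x ∂μ' = ∫ x, f x ∂μ := by
      rw [hμ'def, integral_map (measurable_const_mul c).aemeasurable
        g.continuous.measurable.aestronglyMeasurable]
      refine integral_congr_ae (Filter.Eventually.of_forall fun x => ?_)
      show f ((c * x) / c) = f x
      congr 1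
      field_simp
    show Tendsto (fun n => ∫ x, f x ∂(Qm n)) atTop (𝓝 (∫ x, f x ∂μ))
    have h4 : (fun n => ∫ x, f x ∂(Qm n)) = fun n => ∫ y, g y ∂(PH n) := by
      refine funext fun n => ?_
      rw [hQint n f]
      rfl
    rw [h4, ← h3]
    exact h2
  letI : PseudoMetricSpace (ProbabilityMeasure ℝ) :=
    TopologicalSpace.pseudoMetrizableSpacePseudoMetric _
  have hd : ∀ n : ℕ, ∃ m, dist (K n m) (Q n) < 1/((n:ℝ)+1) := by
    intro n
    have := (tendsto_iff_dist_tendsto_zero.mp (hB n)).eventually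
      (gt_mem_nhds (by positivity : (0:ℝ) < 1/((n:ℝ)+1)))
    exact this.exists
  choose φ hφ using hd
  have hKQ : Tendsto (fun n => K n (φ n)) atTop (𝓝 μP) := by
    rw [tendsto_iff_dist_tendsto_zero]
    have hup : Tendsto (fun n : ℕ => 1/((n:ℝ)+1) + dist (Q n) μP) atTop (𝓝 0) := by
      have h5 := tendsto_one_div_add_atTop_nhds_zero_nat (𝕜 := ℝ)
      have h6 := tendsto_iff_dist_tendsto_zero.mp hA
      simpa using h5.add h6
    refine squeeze_zero (fun n => dist_nonneg) (fun n => ?_) hup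
    calc dist (K n (φ n)) μP ≤ dist (K n (φ n)) (Q n) + dist (Q n) μP := dist_triangle _ _ _
    _ ≤ 1/((n:ℝ)+1) + dist (Q n) μP := by linarith [hφ n]
  refine ⟨fun n => (n+1)^2 + 1, fun n => wgt μ' n, fun n => matT ((n+1)^2) ((n:ℝ)+1),
    fun n => ν₀ (φ n), fun n => hν₀ (φ n),
    fun n => isPHRepr_matT _ _ (hrn n) _ (wgt_nonneg μ' n) (wgt_sum μ' n), ?_⟩
  intro f
  have h7 := ProbabilityMeasure.tendsto_iff_forall_integral_tendsto.mp hKQ f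
  have h9 : Tendsto (fun n => ∫ x, f x ∂(Km n (φ n))) atTop (𝓝 (∫ x, f x ∂μ)) := h7
  have h8 : (fun n => ∫ x, f x ∂(Km n (φ n)))
      = fun n => ∫ q : ℝ × ℝ, f (q.1/q.2) ∂((PH n).prod (ν₀ (φ n))) :=
    funext fun n => hKint n (φ n) f
  rw [h8] at h9
  exact h9
end
end

section
/- Fix α > 0 and a real η ≠ 0. Let p = e^{απ/η}/(1 + e^{απ/η}) and let Y be the hyperexponential (phase-type) random variable with density y ↦ p e^{−y} + (1−p) e^{−π/η} exp(−e^{−π/η} y) on (0,∞), i.e. Y ~ PH(π,T) with π = (p, 1−p) and T = diag(−1, −e^{−π/η}). Then the complex moment E[Y^{α+iη}] = ∫_0^∞ y^{α+iη} (p e^{−y} + (1−p) e^{−π/η} e^{−e^{−π/η} y}) dy equals 0. -/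
open MeasureTheory ProbabilityTheory Filter Matrix Set
open scoped Topology ENNReal

noncomputable section

lemma aux_integrable {a : ℂ} (ha : 0 < a.re) {r : ℝ} (hr : 0 < r) :
    IntegrableOn (fun t : ℝ => (t : ℂ) ^ (a - 1) * Complex.exp (-(r * t))) (Ioi 0) := by
  have H := Complex.GammaIntegral_convergent ha
  rw [← mul_zero r, ← integrableOn_Ioi_comp_mul_left_iff _ _ hr] at H
  refine IntegrableOn.congr_fun (H.const_mul ((1 / r : ℂ) ^ (a - 1)))
    (fun t ht => ?_) measurableSet_Ioi
  have ht : 0 < t := ht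
  show (1/r:ℂ)^(a-1) * (↑(Real.exp (-(r*t))) * (↑(r*t):ℂ)^(a-1)) = _
  rw [Complex.ofReal_mul, Complex.mul_cpow_ofReal_nonneg hr.le ht.le, Complex.ofReal_exp,
    Complex.ofReal_neg, Complex.ofReal_mul]
  have h1 : (1/r:ℂ)^(a-1) * ((r:ℂ)^(a-1)) = 1 := by
    rw [show (1/(r:ℂ)) = ((1/r : ℝ):ℂ) by push_cast; ring,
      ← Complex.mul_cpow_ofReal_nonneg (by positivity : (0:ℝ) ≤ 1/r) hr.le]
    push_cast
    rw [one_div, inv_mul_cancel₀ (by exact_mod_cast hr.ne'), Complex.one_cpow]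
  calc (1/r:ℂ)^(a-1) * (Complex.exp (-(↑r*↑t)) * ((r:ℂ)^(a-1) * (t:ℂ)^(a-1)))
      = ((1/r:ℂ)^(a-1) * (r:ℂ)^(a-1)) * ((t:ℂ)^(a-1) * Complex.exp (-(↑r*↑t))) := by ring
    _ = (t:ℂ)^(a-1) * Complex.exp (-(↑r*↑t)) := by rw [h1, one_mul]

/-- for the hyperexponential distribution with mixing weight
`q = e^{απ/η}/(1+e^{απ/η})` and rates `1` and `e^{-π/η}`, the complex moment
`E[Y^{α+iη}]` vanishes. -/
theorem hyperexp_complex_moment_zero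
    (α η : ℝ) (hα : 0 < α) (hη : η ≠ 0)
    (q : ℝ)
    (hq : q = Real.exp (α * Real.pi / η) / (1 + Real.exp (α * Real.pi / η))) :
    (∫ y in Set.Ioi (0 : ℝ),
        (y : ℂ) ^ ((α : ℂ) + (η : ℂ) * Complex.I) *
          ((q * Real.exp (-y) +
              (1 - q) * Real.exp (-(Real.pi / η)) *
                Real.exp (-(Real.exp (-(Real.pi / η)) * y)) : ℝ) : ℂ))
      = 0 := by
  set lam : ℝ := Real.exp (-(Real.pi / η)) with hlam
  have hlam_pos : 0 < lam := Real.exp_pos _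
  set a : ℂ := ((α : ℂ) + (η : ℂ) * Complex.I) + 1 with ha
  have ha1 : a - 1 = (α : ℂ) + (η : ℂ) * Complex.I := by ring
  have ha_re : 0 < a.re := by simp [ha]; linarith
  have key : ∀ y ∈ Set.Ioi (0:ℝ),
      (y : ℂ) ^ ((α : ℂ) + (η : ℂ) * Complex.I) *
          ((q * Real.exp (-y) + (1 - q) * lam * Real.exp (-(lam * y)) : ℝ) : ℂ)
        = (q : ℂ) * ((y : ℂ) ^ (a - 1) * Complex.exp (-((1:ℝ) * y)))
          + (((1 - q) * lam : ℝ) : ℂ) * ((y : ℂ) ^ (a - 1) * Complex.exp (-(lam * y))) := by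
    intro y _
    rw [ha1]
    push_cast
    ring
  rw [setIntegral_congr_fun measurableSet_Ioi key,
    integral_add ((aux_integrable ha_re one_pos).const_mul _)
      ((aux_integrable ha_re hlam_pos).const_mul _),
    integral_const_mul, integral_const_mul,
    Complex.integral_cpow_mul_exp_neg_mul_Ioi ha_re one_pos,
    Complex.integral_cpow_mul_exp_neg_mul_Ioi ha_re hlam_pos]
  have h1 : ((1:ℝ):ℂ) = 1 := by norm_num
  have hexp : ∀ x : ℝ, ((Real.exp x : ℝ) : ℂ) ^ a = Complex.exp (x * a) := by
    intro x
    rw [Complex.cpow_def_of_ne_zero (by exact_mod_cast (Real.exp_pos x).ne'),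
      ← Complex.ofReal_log (Real.exp_pos x).le, Real.log_exp]
  have hηc : (η:ℂ) ≠ 0 := by exact_mod_cast hη
  have hr0 : (1/lam : ℝ) = Real.exp (Real.pi / η) := by
    rw [hlam, one_div, ← Real.exp_neg, neg_neg]
  have hlaminv : (1 / (lam:ℂ)) = ((Real.exp (Real.pi / η) : ℝ) : ℂ) := by
    rw [← hr0]; push_cast; ring
  have hfac : (lam : ℂ) * (1 / (lam:ℂ)) ^ a = -(Real.exp (α * Real.pi / η) : ℂ) := by
    rw [hlaminv, hexp, hlam, Complex.ofReal_exp, ← Complex.exp_add]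
    have : (↑(-(Real.pi / η)) : ℂ) + ↑(Real.pi / η) * a
        = ((α * Real.pi / η : ℝ) : ℂ) + Real.pi * Complex.I := by
      rw [ha]; push_cast
      field_simp [hηc]
      ring
    rw [this, Complex.exp_add, Complex.exp_pi_mul_I, Complex.ofReal_exp]
    ring
  have hE : (0:ℝ) < 1 + Real.exp (α * Real.pi / η) := by positivity
  have hscal : (q : ℂ) + (((1 - q) * lam : ℝ) : ℂ) * (1 / (lam:ℂ)) ^ a = 0 := by
    rw [Complex.ofReal_mul, mul_assoc, hfac]
    have hr1 : q * (1 + Real.exp (α * Real.pi / η)) = Real.exp (α * Real.pi / η) := by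
      rw [hq]; field_simp
    have h2 : ((q * (1 + Real.exp (α * Real.pi / η)) : ℝ) : ℂ)
        = ((Real.exp (α * Real.pi / η) : ℝ) : ℂ) := by exact_mod_cast congrArg Complex.ofReal hr1
    push_cast at h2 ⊢
    linear_combination h2
  calc (q:ℂ) * ((1/((1:ℝ):ℂ)) ^ a * Complex.Gamma a)
        + (((1 - q) * lam : ℝ):ℂ) * ((1/(lam:ℂ)) ^ a * Complex.Gamma a)
      = ((q : ℂ) + (((1 - q) * lam : ℝ) : ℂ) * (1 / (lam:ℂ)) ^ a) * Complex.Gamma a := by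
        rw [h1]; simp [Complex.one_cpow]; ring
    _ = 0 := by rw [hscal, zero_mul]
end
end

section
/- Let Θ ~ PH(π,T) be a phase-type distributed random variable. Then there exist a positive integer k and a constant c > 0 such that x^k · P(1/Θ > x) → c as x → ∞ (equivalently, F_Θ(u)/u^k → c as u ↓ 0, where F_Θ is the distribution function of Θ). In particular, the law of 1/Θ is regularly varying with index −k. -/
open MeasureTheory ProbabilityTheory Filter Matrix Set
open scoped Topology ENNReal

noncomputable section

section PHAux

open NormedSpace
open scoped Nat

attribute [local instance] Matrix.linftyOpNormedAddCommGroup Matrix.linftyOpNormedRing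
  Matrix.linftyOpNormedAlgebra

variable {p : ℕ}

/-- Entry evaluation as a continuous linear map. -/
def phEntryCLM (i j : Fin p) : Matrix (Fin p) (Fin p) ℝ →L[ℝ] ℝ :=
  LinearMap.toContinuousLinearMap
    { toFun := fun M => M i j
      map_add' := fun _ _ => rfl
      map_smul' := fun _ _ => rfl }

@[simp] lemma phEntryCLM_apply (i j : Fin p) (M : Matrix (Fin p) (Fin p) ℝ) :
    phEntryCLM i j M = M i j := by
  simp [phEntryCLM]
  rfl

/-- The bilinear form `M ↦ π M w` as a continuous linear map. -/
def phCLM (piv w : Fin p → ℝ) : Matrix (Fin p) (Fin p) ℝ →L[ℝ] ℝ :=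
  LinearMap.toContinuousLinearMap
    { toFun := fun M => ∑ i, ∑ j, piv i * M i j * w j
      map_add' := fun M N => by
        rw [← Finset.sum_add_distrib]
        refine Finset.sum_congr rfl fun i _ => ?_
        rw [← Finset.sum_add_distrib]
        refine Finset.sum_congr rfl fun j _ => ?_
        simp only [Matrix.add_apply]
        ring
      map_smul' := fun r M => by
        simp only [RingHom.id_apply, smul_eq_mul]
        rw [Finset.mul_sum]
        refine Finset.sum_congr rfl fun i _ => ?_
        rw [Finset.mul_sum]
        refine Finset.sum_congr rfl fun j _ => ?_
        simp only [Matrix.smul_apply, smul_eq_mul]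
        ring }

@[simp] lemma phCLM_apply (piv w : Fin p → ℝ) (M : Matrix (Fin p) (Fin p) ℝ) :
    phCLM piv w M = ∑ i, ∑ j, piv i * M i j * w j := by
  simp [phCLM]

lemma phSurv_eq (piv : Fin p → ℝ) (T : Matrix (Fin p) (Fin p) ℝ) :
    phSurv piv T = fun u => phCLM piv (fun _ => (1:ℝ)) (exp (u • T)) := by
  funext u
  simp [phSurv]

lemma phDens_eq (piv : Fin p → ℝ) (T : Matrix (Fin p) (Fin p) ℝ) :
    phDens piv T = fun u => phCLM piv (fun j => -∑ k, T j k) (exp (u • T)) := by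
  funext u
  simp [phDens]

lemma phSurv_zero' (piv : Fin p → ℝ) (T : Matrix (Fin p) (Fin p) ℝ)
    (hsum : ∑ i, piv i = 1) : phSurv piv T 0 = 1 := by
  simp [phSurv, zero_smul, exp_zero, Matrix.one_apply, mul_ite, mul_one, mul_zero,
    Finset.sum_ite_eq, hsum]

lemma exp_entry_nonneg {T : Matrix (Fin p) (Fin p) ℝ}
    (hoff : ∀ i j, i ≠ j → 0 ≤ T i j) (hrow : ∀ i, ∑ j, T i j ≤ 0)
    {u : ℝ} (hu : 0 ≤ u) (i j : Fin p) : 0 ≤ exp (u • T) i j := by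
  classical
  have hdiag : ∀ a, T a a ≤ 0 := by
    intro a
    have h1 : T a a + ∑ b ∈ Finset.univ.erase a, T a b = ∑ b, T a b :=
      Finset.add_sum_erase _ _ (Finset.mem_univ a)
    have h2 : 0 ≤ ∑ b ∈ Finset.univ.erase a, T a b :=
      Finset.sum_nonneg fun b hb => hoff a b (Ne.symm (Finset.mem_erase.mp hb).1)
    have h3 := hrow a
    linarith
  set lam : ℝ := ∑ a, -T a a with hlamdef
  have hle : ∀ a, -T a a ≤ lam :=
    fun a => Finset.single_le_sum (f := fun a => -T a a)
      (fun b _ => neg_nonneg.mpr (hdiag b)) (Finset.mem_univ a)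
  set N : Matrix (Fin p) (Fin p) ℝ := T + lam • (1 : Matrix (Fin p) (Fin p) ℝ) with hNdef
  have hNnn : ∀ a b, 0 ≤ (u • N) a b := by
    intro a b
    have hN : 0 ≤ N a b := by
      by_cases hab : a = b
      · subst hab
        simp only [hNdef, Matrix.add_apply, Matrix.smul_apply, Matrix.one_apply_eq,
          smul_eq_mul, mul_one]
        linarith [hle a]
      · simp only [hNdef, Matrix.add_apply, Matrix.smul_apply, Matrix.one_apply_ne hab,
          smul_eq_mul, mul_zero, add_zero]
        exact hoff a b hab
    simpa [Matrix.smul_apply, smul_eq_mul] using mul_nonneg hu hN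
  have hpow : ∀ (n : ℕ) (a b : Fin p), 0 ≤ ((u • N) ^ n) a b := by
    intro n
    induction n with
    | zero =>
      intro a b
      rw [pow_zero, Matrix.one_apply]
      split <;> norm_num
    | succ m ih =>
      intro a b
      rw [pow_succ, Matrix.mul_apply]
      exact Finset.sum_nonneg fun c _ => mul_nonneg (ih a c) (hNnn c b)
  have hdecomp : u • T = (-(u * lam)) • (1 : Matrix (Fin p) (Fin p) ℝ) + u • N := by
    ext a b
    simp only [hNdef, Matrix.smul_apply, Matrix.add_apply, Matrix.one_apply, smul_eq_mul,
      mul_ite, mul_one, mul_zero]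
    split <;> ring
  have hcomm : Commute ((-(u * lam)) • (1 : Matrix (Fin p) (Fin p) ℝ)) (u • N) :=
    (Commute.one_left (u • N)).smul_left _
  have hscal : exp ((-(u * lam)) • (1 : Matrix (Fin p) (Fin p) ℝ))
      = Real.exp (-(u * lam)) • (1 : Matrix (Fin p) (Fin p) ℝ) := by
    have := algebraMap_exp_comm (𝔸 := Matrix (Fin p) (Fin p) ℝ) (-(u * lam))
    rw [← Real.exp_eq_exp_ℝ, Algebra.algebraMap_eq_smul_one, Algebra.algebraMap_eq_smul_one] at this
    exact this.symm
  rw [hdecomp, Matrix.exp_add_of_commute _ _ hcomm, hscal, smul_mul_assoc, one_mul,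
    Matrix.smul_apply, smul_eq_mul]
  refine mul_nonneg (Real.exp_nonneg _) ?_
  have hs : HasSum (fun n : ℕ => ((n ! : ℝ)⁻¹) • (u • N) ^ n) (exp (u • N)) :=
    exp_series_hasSum_exp' _
  have hm := (phEntryCLM i j).hasSum hs
  have h0 : (0:ℝ) ≤ phEntryCLM i j (exp (u • N)) := by
    refine hasSum_le (fun n => ?_) hasSum_zero hm
    simp only [phEntryCLM_apply, Matrix.smul_apply, smul_eq_mul]
    exact mul_nonneg (by positivity) (hpow n i j)
  simpa using h0

lemma phAnalytic (piv w : Fin p → ℝ) (T : Matrix (Fin p) (Fin p) ℝ) :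
    AnalyticOnNhd ℝ (fun u : ℝ => phCLM piv w (exp (u • T))) Set.univ := by
  intro u _
  have h1 : AnalyticAt ℝ (exp : Matrix (Fin p) (Fin p) ℝ → Matrix (Fin p) (Fin p) ℝ)
      (u • T) :=
    analyticAt_exp_of_mem_ball _ (by rw [expSeries_radius_eq_top]; exact edist_lt_top _ _)
  have h2 : AnalyticAt ℝ (fun u : ℝ => u • T) u := analyticAt_id.smul analyticAt_const
  have h3 := AnalyticAt.comp (f := fun v : ℝ => v • T) (x := u) h1 h2
  exact AnalyticAt.comp (f := fun v : ℝ => exp (v • T)) (x := u)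
    ((phCLM piv w).analyticAt (exp (u • T))) h3

lemma hasDerivAt_phSurv' (piv : Fin p → ℝ) (T : Matrix (Fin p) (Fin p) ℝ) (u : ℝ) :
    HasDerivAt (phSurv piv T) (-phDens piv T u) u := by
  have h1 := hasDerivAt_exp_smul_const (𝕂 := ℝ) T u
  have h2 := (phCLM piv fun _ => (1:ℝ)).hasFDerivAt.comp_hasDerivAt u h1
  have hval : phCLM piv (fun _ => (1:ℝ)) (exp (u • T) * T) = -phDens piv T u := by
    rw [phCLM_apply]
    have hD : -phDens piv T u
        = ∑ i, ∑ j, piv i * exp (u • T) i j * (∑ k, T j k) := by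
      rw [phDens, ← Finset.sum_neg_distrib]
      refine Finset.sum_congr rfl fun i _ => ?_
      rw [← Finset.sum_neg_distrib]
      exact Finset.sum_congr rfl fun j _ => by ring
    rw [hD]
    refine Finset.sum_congr rfl fun i _ => ?_
    calc ∑ j, piv i * (exp (u • T) * T) i j * 1
        = ∑ j, ∑ k, piv i * (exp (u • T) i k * T k j) := by
          refine Finset.sum_congr rfl fun j _ => ?_
          rw [mul_one, Matrix.mul_apply, Finset.mul_sum]
      _ = ∑ k, ∑ j, piv i * (exp (u • T) i k * T k j) := Finset.sum_comm
      _ = ∑ j, piv i * exp (u • T) i j * (∑ k, T j k) := by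
          refine Finset.sum_congr rfl fun k _ => ?_
          rw [Finset.mul_sum]
          exact Finset.sum_congr rfl fun j _ => by ring
  rw [phSurv_eq piv T, ← hval]
  exact h2

lemma continuous_phDens (piv : Fin p → ℝ) (T : Matrix (Fin p) (Fin p) ℝ) :
    Continuous (phDens piv T) := by
  rw [phDens_eq piv T]
  exact (phCLM _ _).continuous.comp (exp_continuous.comp (continuous_id.smul continuous_const))

lemma integral_phDens (piv : Fin p → ℝ) (T : Matrix (Fin p) (Fin p) ℝ)
    (hsum : ∑ i, piv i = 1) {u : ℝ} (hu : 0 < u) :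
    ∫ y in Set.Ioo (0:ℝ) u, phDens piv T y = 1 - phSurv piv T u := by
  have hFTC := intervalIntegral.integral_eq_sub_of_hasDerivAt
      (f := fun y => -phSurv piv T y) (f' := phDens piv T)
      (fun y _ => by have := (hasDerivAt_phSurv' piv T y).neg; rwa [neg_neg] at this)
      ((continuous_phDens piv T).intervalIntegrable 0 u)
  rw [← MeasureTheory.integral_Ioc_eq_integral_Ioo, ← intervalIntegral.integral_of_le hu.le,
    hFTC]
  show -phSurv piv T u - -phSurv piv T 0 = 1 - phSurv piv T u
  rw [phSurv_zero' piv T hsum]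
  ring

lemma phMeasure_Ioo' (piv : Fin p → ℝ) (T : Matrix (Fin p) (Fin p) ℝ)
    (hsum : ∑ i, piv i = 1) (hnn : ∀ y : ℝ, 0 ≤ y → 0 ≤ phDens piv T y)
    {u : ℝ} (hu : 0 < u) :
    phMeasure piv T (Set.Ioo 0 u) = ENNReal.ofReal (1 - phSurv piv T u) := by
  have hInt : IntegrableOn (phDens piv T) (Set.Ioo (0:ℝ) u) :=
    ((continuous_phDens piv T).integrableOn_Icc).mono_set Set.Ioo_subset_Icc_self
  have hae : 0 ≤ᵐ[volume.restrict (Set.Ioo (0:ℝ) u)] phDens piv T :=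
    (ae_restrict_iff' measurableSet_Ioo).mpr (ae_of_all _ fun y hy => hnn y hy.1.le)
  rw [phMeasure, withDensity_apply _ measurableSet_Ioo,
    setLIntegral_congr_fun measurableSet_Ioo (fun y hy => if_pos hy.1),
    ← ofReal_integral_eq_lintegral_ofReal hInt hae, integral_phDens piv T hsum hu]

end PHAux

/-- if `Θ ~ PH(π,T)`, then there are a positive integer `k` and `c > 0` with
`x^k P(1/Θ > x) → c` as `x → ∞`; in particular, the law of `1/Θ` is regularly varying with
index `-k`. -/
theorem ph_reciprocal_regvary
    {Ω : Type*} [MeasureSpace Ω] [IsProbabilityMeasure (ℙ : Measure Ω)]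
    {p : ℕ} (piv : Fin p → ℝ) (T : Matrix (Fin p) (Fin p) ℝ) (hPH : IsPHRepr piv T)
    (Θ : Ω → ℝ) (hΘm : Measurable Θ)
    (hΘlaw : Measure.map Θ ℙ = phMeasure piv T) :
    ∃ k : ℕ, 0 < k ∧ ∃ c : ℝ, 0 < c ∧
      Tendsto (fun x : ℝ => x ^ k * (ℙ {ω | 1 / Θ ω > x}).toReal) atTop (𝓝 c) ∧
      RegVary (Measure.map (fun ω => 1 / Θ ω) ℙ) k := by
  classical
  have hsum := hPH.pi_sum_one
  have hnnD : ∀ y : ℝ, 0 ≤ y → 0 ≤ phDens piv T y := fun y hy =>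
    Finset.sum_nonneg fun i _ => Finset.sum_nonneg fun j _ =>
      mul_nonneg (mul_nonneg (hPH.pi_nonneg i)
        (exp_entry_nonneg hPH.offdiag_nonneg hPH.rowsum_nonpos hy i j))
        (neg_nonneg.mpr (hPH.rowsum_nonpos j))
  set h : ℝ → ℝ := fun u => 1 - phSurv piv T u with hh
  have hmeasIoo : ∀ u : ℝ, 0 < u → phMeasure piv T (Set.Ioo 0 u) = ENNReal.ofReal (h u) :=
    fun u hu => phMeasure_Ioo' piv T hsum hnnD hu
  have hnnh : ∀ u : ℝ, 0 < u → 0 ≤ h u := by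
    intro u hu
    rw [hh]
    simp only
    rw [← integral_phDens piv T hsum hu]
    exact setIntegral_nonneg measurableSet_Ioo fun y hy => hnnD y hy.1.le
  have hAn : AnalyticOnNhd ℝ h Set.univ := by
    intro u hu
    have h1 : AnalyticAt ℝ
        (fun u : ℝ => phCLM piv (fun _ => (1:ℝ)) (NormedSpace.exp (u • T))) u :=
      phAnalytic piv (fun _ => (1:ℝ)) T u hu
    have h2 : h = fun u => 1 - phCLM piv (fun _ => (1:ℝ)) (NormedSpace.exp (u • T)) := by
      funext v
      rw [hh, phSurv_eq piv T]
    rw [h2]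
    exact analyticAt_const.sub h1
  have hprob : IsProbabilityMeasure (phMeasure piv T) := by
    rw [← hΘlaw]
    exact Measure.isProbabilityMeasure_map hΘm.aemeasurable
  have hIic : phMeasure piv T (Set.Iic 0) = 0 := by
    rw [phMeasure, withDensity_apply _ measurableSet_Iic,
      setLIntegral_congr_fun measurableSet_Iic
        (fun y (hy : y ∈ Set.Iic (0:ℝ)) => if_neg (not_lt.mpr hy))]
    simp
  have hIoi : phMeasure piv T (Set.Ioi 0) = 1 := by
    have h1 : phMeasure piv T (Set.Iic 0) + phMeasure piv T (Set.Ioi 0) = 1 := by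
      rw [← measure_union (Set.Iic_disjoint_Ioi le_rfl) measurableSet_Ioi, Set.Iic_union_Ioi]
      exact hprob.measure_univ
    rw [hIic, zero_add] at h1
    exact h1
  have hne : ¬ (∀ᶠ u in 𝓝 (0:ℝ), h u = 0) := by
    intro hev
    have hzero : ∀ u : ℝ, h u = 0 := fun u =>
      hAn.eqOn_zero_of_preconnected_of_eventuallyEq_zero isPreconnected_univ
        (Set.mem_univ 0) hev (Set.mem_univ u)
    have hsub : Set.Ioi (0:ℝ) ⊆ ⋃ n : ℕ, Set.Ioo (0:ℝ) n := by
      intro y hy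
      obtain ⟨n, hn⟩ := exists_nat_gt y
      exact Set.mem_iUnion.2 ⟨n, hy, hn⟩
    have hz : ∀ n : ℕ, phMeasure piv T (Set.Ioo (0:ℝ) n) = 0 := by
      intro n
      rcases Nat.eq_zero_or_pos n with hn | hn
      · subst hn; simp
      · rw [hmeasIoo n (by exact_mod_cast hn), hzero]
        simp
    have hle : (1 : ℝ≥0∞) ≤ ∑' n : ℕ, phMeasure piv T (Set.Ioo (0:ℝ) n) := by
      rw [← hIoi]
      exact (measure_mono hsub).trans (measure_iUnion_le _)
    simp [hz] at hle
  have hA0 : AnalyticAt ℝ h 0 := hAn 0 (Set.mem_univ 0)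
  have hordne : analyticOrderAt h 0 ≠ ⊤ := fun ht => hne (analyticOrderAt_eq_top.mp ht)
  obtain ⟨k, hk⟩ := WithTop.ne_top_iff_exists.mp hordne
  obtain ⟨g, hgan, hg0, hev⟩ := (hA0.analyticOrderAt_eq_natCast (n := k)).mp hk.symm
  have hh0 : h 0 = 0 := by
    rw [hh]
    simp [phSurv_zero' piv T hsum]
  have hk0 : k ≠ 0 := by
    intro hkz
    subst hkz
    have h00 := hev.self_of_nhds
    rw [hh0] at h00
    simp only [sub_zero, pow_zero, one_smul] at h00
    exact hg0 h00.symm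
  set c := g 0 with hc
  have hgc : ContinuousAt g 0 := hgan.continuousAt
  have hcpos : 0 < c := by
    have hge : 0 ≤ c := by
      have hev' : ∀ᶠ u in 𝓝[>] (0:ℝ), 0 ≤ g u := by
        filter_upwards [hev.filter_mono nhdsWithin_le_nhds, self_mem_nhdsWithin] with u hu hu'
        have h1 : 0 ≤ h u := hnnh u hu'
        rw [hu] at h1
        simp only [sub_zero, smul_eq_mul] at h1
        nlinarith [pow_pos (Set.mem_Ioi.mp hu') k]
      exact ge_of_tendsto (hgc.continuousWithinAt.tendsto) hev'
    exact hge.lt_of_ne (Ne.symm hg0)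
  have hmeas1 : Measurable fun ω => 1 / Θ ω := by
    have heq : (fun ω => 1 / Θ ω) = fun ω => (Θ ω)⁻¹ := funext fun ω => one_div _
    rw [heq]
    exact hΘm.inv
  have hsetpre : ∀ x : ℝ, 0 < x → {ω | 1 / Θ ω > x} = Θ ⁻¹' Set.Ioo 0 (1/x) := by
    intro x hx
    ext ω
    simp only [Set.mem_setOf_eq, gt_iff_lt, Set.mem_preimage, Set.mem_Ioo]
    constructor
    · intro hlt
      have hy : 0 < Θ ω := by
        by_contra hley
        push_neg at hley
        have : 1 / Θ ω ≤ 0 := one_div_nonpos.mpr hley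
        linarith
      refine ⟨hy, ?_⟩
      have h2 := one_div_lt_one_div_of_lt hx hlt
      rwa [one_div_one_div] at h2
    · rintro ⟨hy, hyx⟩
      have h2 := one_div_lt_one_div_of_lt hy hyx
      rwa [one_div_one_div] at h2
  have htailr : ∀ x : ℝ, 0 < x → (ℙ {ω | 1 / Θ ω > x}).toReal = h (1/x) := by
    intro x hx
    have h1x : (0:ℝ) < 1/x := by positivity
    rw [hsetpre x hx, ← Measure.map_apply hΘm measurableSet_Ioo, hΘlaw, hmeasIoo (1/x) h1x,
      ENNReal.toReal_ofReal (hnnh _ h1x)]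
  rw [Metric.eventually_nhds_iff] at hev
  obtain ⟨δ, hδ, hball⟩ := hev
  have hAls : ∀ᶠ x : ℝ in atTop, x ^ k * (ℙ {ω | 1 / Θ ω > x}).toReal = g (1/x) := by
    filter_upwards [eventually_gt_atTop 0, eventually_gt_atTop δ⁻¹] with x hx hxd
    have h1x : 1/x < δ := by
      rw [div_lt_iff₀ hx]
      calc (1:ℝ) = δ * δ⁻¹ := (mul_inv_cancel₀ hδ.ne').symm
        _ < δ * x := mul_lt_mul_of_pos_left hxd hδ
    have hd : dist (1/x) (0:ℝ) < δ := by
      rw [Real.dist_eq, sub_zero, abs_of_pos (by positivity)]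
      exact h1x
    rw [htailr x hx, hball hd]
    simp only [sub_zero, smul_eq_mul]
    rw [← mul_assoc, ← mul_pow, mul_one_div_cancel hx.ne', one_pow, one_mul]
  have hginv : Tendsto (fun x : ℝ => g (1/x)) atTop (𝓝 c) := by
    have h0 : Tendsto (fun x : ℝ => 1/x) atTop (𝓝 0) := by
      simpa [one_div] using tendsto_inv_atTop_zero
    exact hgc.tendsto.comp h0
  have hAtend : Tendsto (fun x : ℝ => x ^ k * (ℙ {ω | 1 / Θ ω > x}).toReal) atTop (𝓝 c) :=
    Tendsto.congr' (EventuallyEq.symm hAls) hginv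
  have hev2 : ∀ᶠ x : ℝ in atTop, c/2 < x ^ k * (ℙ {ω | 1 / Θ ω > x}).toReal :=
    hAtend.eventually (eventually_gt_nhds (by linarith))
  have hposR : ∀ᶠ x : ℝ in atTop, 0 < (ℙ {ω | 1 / Θ ω > x}).toReal := by
    filter_upwards [hev2, eventually_gt_atTop 0] with x h1 hx
    nlinarith [pow_pos hx k]
  have hpre : ∀ y : ℝ, (fun ω => 1 / Θ ω) ⁻¹' Set.Ioi y = {ω | 1 / Θ ω > y} := fun y => rfl
  refine ⟨k, Nat.pos_of_ne_zero hk0, c, hcpos, hAtend, ?_, ?_⟩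
  · filter_upwards [hposR] with x htp
    rw [Measure.map_apply hmeas1 measurableSet_Ioi, hpre]
    exact (ENNReal.toReal_pos_iff.mp htp).1
  · intro l hl
    have hmul : Tendsto (fun x : ℝ => l * x) atTop atTop :=
      Tendsto.const_mul_atTop hl tendsto_id
    have hAl : Tendsto (fun x : ℝ => (l*x) ^ k * (ℙ {ω | 1 / Θ ω > l*x}).toReal) atTop (𝓝 c) :=
      hAtend.comp hmul
    have key := (hAl.div hAtend hcpos.ne').mul_const ((l:ℝ) ^ (-(k:ℝ)))
    rw [div_self hcpos.ne', one_mul] at key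
    refine Tendsto.congr' ?_ key
    have hrp : (l:ℝ) ^ (-(k:ℝ)) = ((l:ℝ) ^ k)⁻¹ := by
      rw [Real.rpow_neg hl.le, Real.rpow_natCast]
    filter_upwards [hposR, eventually_gt_atTop 0] with x htp hx
    simp only [Pi.div_apply]
    rw [Measure.map_apply hmeas1 measurableSet_Ioi, Measure.map_apply hmeas1 measurableSet_Ioi,
      hpre, hpre]
    rw [hrp, mul_pow]
    have hxk : (x:ℝ) ^ k ≠ 0 := (pow_pos hx k).ne'
    have hlk : (l:ℝ) ^ k ≠ 0 := (pow_pos hl k).ne'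
    field_simp
end
end

section
/- Let V be a nonnegative random variable with long-tailed distribution function F_V ∈ L, and let Y ~ PH(π,T) be a phase-type distributed random variable independent of V. Then for every b > 0, the survival function of Y is negligible compared to that of the product VY along the scaling b: F̄_Y(x)/F̄_{VY}(bx) → 0 as x → ∞, i.e. F̄_Y(x) = o(F̄_{VY}(bx)). -/
open MeasureTheory ProbabilityTheory Filter Matrix Set
open scoped Topology ENNReal

noncomputable section

namespace PHaux
variable {p : ℕ}
variable {p : ℕ}

lemma expEntry_hasSum (A : Matrix (Fin p) (Fin p) ℝ) (i j : Fin p) :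
    HasSum (fun n : ℕ => (n.factorial : ℝ)⁻¹ * (A ^ n) i j) (NormedSpace.exp A i j) := by
  letI : SeminormedRing (Matrix (Fin p) (Fin p) ℝ) := Matrix.linftyOpSemiNormedRing
  letI : NormedRing (Matrix (Fin p) (Fin p) ℝ) := Matrix.linftyOpNormedRing
  letI : NormedAlgebra ℝ (Matrix (Fin p) (Fin p) ℝ) := Matrix.linftyOpNormedAlgebra
  have h : HasSum (fun n : ℕ => (n.factorial : ℝ)⁻¹ • A ^ n) (NormedSpace.exp A) := by
    rw [NormedSpace.exp_eq_tsum ℝ]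
    exact (NormedSpace.expSeries_summable' (𝕂 := ℝ) A).hasSum
  have h2 := h.mapL (LinearMap.toContinuousLinearMap (Matrix.entryLinearMap ℝ ℝ i j))
  simpa using h2

lemma pow_entry_nonneg {A : Matrix (Fin p) (Fin p) ℝ} (hA : ∀ i j, 0 ≤ A i j) (n : ℕ) :
    ∀ i j, 0 ≤ (A ^ n) i j := by
  induction n with
  | zero =>
    intro i j
    simp only [pow_zero, Matrix.one_apply]
    split <;> norm_num
  | succ n ih =>
    intro i j
    rw [pow_succ, Matrix.mul_apply]
    exact Finset.sum_nonneg fun k _ => mul_nonneg (ih i k) (hA k j)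

lemma exp_entry_nonneg {A : Matrix (Fin p) (Fin p) ℝ} (hA : ∀ i j, 0 ≤ A i j) (i j : Fin p) :
    0 ≤ NormedSpace.exp A i j := by
  rw [← (expEntry_hasSum A i j).tsum_eq]
  exact tsum_nonneg fun n => mul_nonneg (by positivity) (pow_entry_nonneg hA n i j)

lemma exp_smul_entry_nonneg {T : Matrix (Fin p) (Fin p) ℝ}
    (hoff : ∀ i j, i ≠ j → 0 ≤ T i j) {y : ℝ} (hy : 0 ≤ y) (i j : Fin p) :
    0 ≤ NormedSpace.exp (y • T) i j := by
  classical
  set c : ℝ := ∑ k, |T k k| with hc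
  have hcb : ∀ k, -T k k ≤ c := by
    intro k
    refine le_trans (neg_le_abs _) ?_
    exact Finset.single_le_sum (f := fun k => |T k k|) (fun k _ => abs_nonneg _)
      (Finset.mem_univ k)
  have hS : ∀ a b, 0 ≤ ((y * c) • (1 : Matrix (Fin p) (Fin p) ℝ) + y • T) a b := by
    intro a b
    rcases eq_or_ne a b with rfl | hab
    · simp only [Matrix.add_apply, Matrix.smul_apply, Matrix.one_apply_eq, smul_eq_mul, mul_one]
      have : 0 ≤ c + T a a := by have := hcb a; linarith
      nlinarith
    · simp only [Matrix.add_apply, Matrix.smul_apply, Matrix.one_apply_ne hab, smul_eq_mul,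
        mul_zero, zero_add]
      exact mul_nonneg hy (hoff a b hab)
  have hexp1 : NormedSpace.exp ((y * c) • (1 : Matrix (Fin p) (Fin p) ℝ))
      = Real.exp (y * c) • (1 : Matrix (Fin p) (Fin p) ℝ) := by
    letI : SeminormedRing (Matrix (Fin p) (Fin p) ℝ) := Matrix.linftyOpSemiNormedRing
    letI : NormedRing (Matrix (Fin p) (Fin p) ℝ) := Matrix.linftyOpNormedRing
    letI : NormedAlgebra ℝ (Matrix (Fin p) (Fin p) ℝ) := Matrix.linftyOpNormedAlgebra
    rw [← Algebra.algebraMap_eq_smul_one]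
    erw [← NormedSpace.algebraMap_exp_comm]
    rw [← Real.exp_eq_exp_ℝ, Algebra.algebraMap_eq_smul_one]
  have hcomm : Commute ((y * c) • (1 : Matrix (Fin p) (Fin p) ℝ)) (y • T) :=
    ((Commute.one_left T).smul_left (y * c)).smul_right y
  have key : NormedSpace.exp ((y * c) • (1 : Matrix (Fin p) (Fin p) ℝ) + y • T)
      = Real.exp (y * c) • NormedSpace.exp (y • T) := by
    rw [Matrix.exp_add_of_commute _ _ hcomm, hexp1, smul_mul_assoc, one_mul]
  have h0 := exp_entry_nonneg hS i j
  rw [key, Matrix.smul_apply, smul_eq_mul] at h0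
  nlinarith [Real.exp_pos (y * c)]
variable {p : ℕ}

lemma hasDerivAt_expEntry (T : Matrix (Fin p) (Fin p) ℝ) (y : ℝ) (i j : Fin p) :
    HasDerivAt (fun s : ℝ => NormedSpace.exp (s • T) i j)
      ((NormedSpace.exp (y • T) * T) i j) y := by
  letI : SeminormedRing (Matrix (Fin p) (Fin p) ℝ) := Matrix.linftyOpSemiNormedRing
  letI : NormedRing (Matrix (Fin p) (Fin p) ℝ) := Matrix.linftyOpNormedRing
  letI : NormedAlgebra ℝ (Matrix (Fin p) (Fin p) ℝ) := Matrix.linftyOpNormedAlgebra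
  have h2 := (LinearMap.toContinuousLinearMap
    (Matrix.entryLinearMap ℝ ℝ i j)).hasFDerivAt.comp_hasDerivAt y
    (hasDerivAt_exp_smul_const T y)
  exact h2

lemma hasDerivAt_expEntry' (T : Matrix (Fin p) (Fin p) ℝ) (y : ℝ) (i j : Fin p) :
    HasDerivAt (fun s : ℝ => NormedSpace.exp (s • T) i j)
      ((T * NormedSpace.exp (y • T)) i j) y := by
  letI : SeminormedRing (Matrix (Fin p) (Fin p) ℝ) := Matrix.linftyOpSemiNormedRing
  letI : NormedRing (Matrix (Fin p) (Fin p) ℝ) := Matrix.linftyOpNormedRing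
  letI : NormedAlgebra ℝ (Matrix (Fin p) (Fin p) ℝ) := Matrix.linftyOpNormedAlgebra
  have h2 := (LinearMap.toContinuousLinearMap
    (Matrix.entryLinearMap ℝ ℝ i j)).hasFDerivAt.comp_hasDerivAt y
    (hasDerivAt_exp_smul_const' T y)
  exact h2

lemma continuous_expEntry (T : Matrix (Fin p) (Fin p) ℝ) (i j : Fin p) :
    Continuous fun s : ℝ => NormedSpace.exp (s • T) i j :=
  continuous_iff_continuousAt.2 fun y => (hasDerivAt_expEntry T y i j).continuousAt

lemma usum_hasDerivAt (T : Matrix (Fin p) (Fin p) ℝ) (i : Fin p) (y : ℝ) :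
    HasDerivAt (fun s : ℝ => ∑ j, NormedSpace.exp (s • T) i j)
      (∑ j, (NormedSpace.exp (y • T) * T) i j) y :=
  HasDerivAt.fun_sum fun j _ => hasDerivAt_expEntry T y i j

lemma usum_zero (T : Matrix (Fin p) (Fin p) ℝ) (i : Fin p) :
    ∑ j, NormedSpace.exp ((0 : ℝ) • T) i j = 1 := by
  simp [zero_smul, NormedSpace.exp_zero, Matrix.one_apply]

lemma usum_antitoneOn {T : Matrix (Fin p) (Fin p) ℝ}
    (hoff : ∀ i j, i ≠ j → 0 ≤ T i j) (hrow : ∀ i, ∑ j, T i j ≤ 0) (i : Fin p) :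
    AntitoneOn (fun y : ℝ => ∑ j, NormedSpace.exp (y • T) i j) (Ici 0) := by
  refine antitoneOn_of_deriv_nonpos (convex_Ici 0) ?_ ?_ ?_
  · exact (continuous_finset_sum _ fun j _ => continuous_expEntry T i j).continuousOn
  · intro x hx
    exact (usum_hasDerivAt T i x).differentiableAt.differentiableWithinAt
  · intro x hx
    rw [interior_Ici] at hx
    rw [(usum_hasDerivAt T i x).deriv]
    have hx0 : (0 : ℝ) ≤ x := le_of_lt hx
    have : ∑ j, (NormedSpace.exp (x • T) * T) i j
        = ∑ k, NormedSpace.exp (x • T) i k * ∑ j, T k j := by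
      simp_rw [Matrix.mul_apply, Finset.mul_sum]
      exact Finset.sum_comm
    rw [this]
    refine Finset.sum_nonpos fun k _ => ?_
    exact mul_nonpos_iff.2 (Or.inl ⟨exp_smul_entry_nonneg hoff hx0 i k, hrow k⟩)

lemma usum_le_one {T : Matrix (Fin p) (Fin p) ℝ}
    (hoff : ∀ i j, i ≠ j → 0 ≤ T i j) (hrow : ∀ i, ∑ j, T i j ≤ 0) (i : Fin p)
    {y : ℝ} (hy : 0 ≤ y) :
    ∑ j, NormedSpace.exp (y • T) i j ≤ 1 := by
  have := usum_antitoneOn hoff hrow i (self_mem_Ici) hy hy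
  simpa [zero_smul, NormedSpace.exp_zero, Matrix.one_apply] using this

lemma isUnit_det_of_eig {T : Matrix (Fin p) (Fin p) ℝ}
    (heig : ∀ z ∈ spectrum ℂ (T.map (algebraMap ℝ ℂ)), z.re < 0) : IsUnit T.det := by
  rw [isUnit_iff_ne_zero]
  intro h0
  have hdet : (T.map (algebraMap ℝ ℂ)).det = 0 := by
    have : ((algebraMap ℝ ℂ).mapMatrix T).det = 0 := by
      rw [← RingHom.map_det, h0, map_zero]
    exact this
  have : ¬ IsUnit (T.map (algebraMap ℝ ℂ)) := by
    rw [Matrix.isUnit_iff_isUnit_det, hdet]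
    simp
  have h2 : (0 : ℂ) ∈ spectrum ℂ (T.map (algebraMap ℝ ℂ)) := (spectrum.zero_mem_iff ℂ).2 this
  have := heig 0 h2
  simp at this
lemma exists_y0 {T : Matrix (Fin p) (Fin p) ℝ}
    (hoff : ∀ i j, i ≠ j → 0 ≤ T i j) (hrow : ∀ i, ∑ j, T i j ≤ 0)
    (hdet : IsUnit T.det) :
    ∃ y0 : ℝ, 0 < y0 ∧ ∀ i, ∑ j, NormedSpace.exp (y0 • T) i j < 1 := by
  classical
  have Hi : ∀ i : Fin p, ∃ y : ℝ, 0 < y ∧ ∑ j, NormedSpace.exp (y • T) i j < 1 := by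
    intro i
    by_contra hcon
    push_neg at hcon
    -- hcon : ∀ y, 0 < y → 1 ≤ ∑ j, exp (y • T) i j
    set W : Matrix (Fin p) (Fin p) ℝ := T⁻¹ with hW
    set f : ℝ → ℝ := fun y => ∑ j, ∑ k, W i k * NormedSpace.exp (y • T) k j with hf
    have hder : ∀ y : ℝ, HasDerivAt f (∑ j, NormedSpace.exp (y • T) i j) y := by
      intro y
      have h1 : HasDerivAt f
          (∑ j, ∑ k, W i k * (T * NormedSpace.exp (y • T)) k j) y := by
        refine HasDerivAt.fun_sum fun j _ => HasDerivAt.fun_sum fun k _ => ?_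
        exact (hasDerivAt_expEntry' T y k j).const_mul (W i k)
      have h2 : (∑ j, ∑ k, W i k * (T * NormedSpace.exp (y • T)) k j)
          = ∑ j, NormedSpace.exp (y • T) i j := by
        have : ∀ j, ∑ k, W i k * (T * NormedSpace.exp (y • T)) k j
            = (W * (T * NormedSpace.exp (y • T))) i j := fun j =>
          (Matrix.mul_apply).symm
        simp_rw [this, ← Matrix.mul_assoc, hW, Matrix.nonsing_inv_mul T hdet, Matrix.one_mul]
      rwa [h2] at h1
    set g : ℝ → ℝ := fun y => f y - y with hg
    have hderg : ∀ y : ℝ, HasDerivAt g (∑ j, NormedSpace.exp (y • T) i j - 1) y :=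
      fun y => (hder y).sub (hasDerivAt_id y)
    have hmono : MonotoneOn g (Ici 0) := by
      refine monotoneOn_of_deriv_nonneg (convex_Ici 0) ?_ ?_ ?_
      · exact Continuous.continuousOn (by
          refine Continuous.sub ?_ continuous_id
          exact continuous_finset_sum _ fun j _ =>
            continuous_finset_sum _ fun k _ => continuous_const.mul (continuous_expEntry T k j))
      · intro x hx
        exact (hderg x).differentiableAt.differentiableWithinAt
      · intro x hx
        rw [interior_Ici] at hx
        rw [(hderg x).deriv]
        have := hcon x hx
        linarith
    set K : ℝ := ∑ k, |W i k| with hK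
    have hK0 : 0 ≤ K := Finset.sum_nonneg fun k _ => abs_nonneg _
    have hfb : ∀ y : ℝ, 0 ≤ y → |f y| ≤ K := by
      intro y hy
      have h1 : |f y| ≤ ∑ j, ∑ k, |W i k| * NormedSpace.exp (y • T) k j := by
        refine le_trans (Finset.abs_sum_le_sum_abs _ _) ?_
        refine Finset.sum_le_sum fun j _ => ?_
        refine le_trans (Finset.abs_sum_le_sum_abs _ _) ?_
        refine Finset.sum_le_sum fun k _ => ?_
        rw [abs_mul, abs_of_nonneg (exp_smul_entry_nonneg hoff hy k j)]
      have h2 : ∑ j, ∑ k, |W i k| * NormedSpace.exp (y • T) k j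
          = ∑ k, |W i k| * ∑ j, NormedSpace.exp (y • T) k j := by
        rw [Finset.sum_comm]
        simp_rw [Finset.mul_sum]
      have h3 : ∑ k, |W i k| * ∑ j, NormedSpace.exp (y • T) k j ≤ K := by
        rw [hK]
        refine Finset.sum_le_sum fun k _ => ?_
        have := usum_le_one hoff hrow k hy
        nlinarith [abs_nonneg (W i k)]
      linarith
    have hY : (0 : ℝ) ≤ 2 * K + 1 := by linarith
    have := hmono self_mem_Ici (mem_Ici.2 hY) hY
    have hb1 := hfb (2 * K + 1) hY
    have hb2 := hfb 0 le_rfl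
    rw [hg] at this
    simp only at this
    have habs1 := abs_le.1 hb1
    have habs2 := abs_le.1 hb2
    linarith [habs1.2, habs2.1, habs1.1, habs2.2]
  choose yc hyc using Hi
  refine ⟨1 + ∑ i, |yc i|, by positivity, fun i => ?_⟩
  have h1 : yc i ≤ 1 + ∑ k, |yc k| := by
    have : yc i ≤ |yc i| := le_abs_self _
    have h2 : |yc i| ≤ ∑ k, |yc k| :=
      Finset.single_le_sum (f := fun k => |yc k|) (fun k _ => abs_nonneg _) (Finset.mem_univ i)
    linarith
  have h0 : (0 : ℝ) ≤ yc i := (hyc i).1.le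
  have := usum_antitoneOn hoff hrow i (mem_Ici.2 h0)
    (mem_Ici.2 (by positivity : (0:ℝ) ≤ 1 + ∑ k, |yc k|)) h1
  exact lt_of_le_of_lt this (hyc i).2
lemma tail_exp_bound {T : Matrix (Fin p) (Fin p) ℝ}
    (hoff : ∀ i j, i ≠ j → 0 ≤ T i j) (hrow : ∀ i, ∑ j, T i j ≤ 0)
    (hdet : IsUnit T.det) :
    ∃ δ : ℝ, 0 < δ ∧ ∀ y : ℝ, 0 ≤ y → ∀ i,
      ∑ j, NormedSpace.exp (y • T) i j ≤ 2 * Real.exp (-δ * y) := by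
  classical
  obtain ⟨y0, hy0, hy0lt⟩ := exists_y0 hoff hrow hdet
  rcases Nat.eq_zero_or_pos p with hp | hp
  · subst hp
    exact ⟨1, one_pos, fun y hy i => absurd i.2 (by omega)⟩
  haveI : Nonempty (Fin p) := Fin.pos_iff_nonempty.1 hp
  set s : ℝ := max (Finset.univ.sup' Finset.univ_nonempty
      fun i => ∑ j, NormedSpace.exp (y0 • T) i j) (1/2) with hs
  have hs_half : (1/2 : ℝ) ≤ s := le_max_right _ _
  have hs_pos : (0 : ℝ) < s := by linarith
  have hs_lt : s < 1 := by
    refine max_lt ?_ (by norm_num)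
    exact (Finset.sup'_lt_iff _).2 fun i _ => hy0lt i
  have hle_s : ∀ i, ∑ j, NormedSpace.exp (y0 • T) i j ≤ s := fun i =>
    le_trans (Finset.le_sup' (f := fun i => ∑ j, NormedSpace.exp (y0 • T) i j)
      (Finset.mem_univ i)) (le_max_left _ _)
  have hsub : ∀ y : ℝ, 0 ≤ y → ∀ i,
      ∑ j, NormedSpace.exp ((y + y0) • T) i j
        ≤ s * ∑ j, NormedSpace.exp (y • T) i j := by
    intro y hy i
    have hcomm : Commute (y • T) (y0 • T) := ((Commute.refl T).smul_left y).smul_right y0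
    have hadd : NormedSpace.exp ((y + y0) • T)
        = NormedSpace.exp (y • T) * NormedSpace.exp (y0 • T) := by
      rw [add_smul]
      exact Matrix.exp_add_of_commute _ _ hcomm
    rw [hadd]
    have h1 : ∑ j, (NormedSpace.exp (y • T) * NormedSpace.exp (y0 • T)) i j
        = ∑ k, NormedSpace.exp (y • T) i k * ∑ j, NormedSpace.exp (y0 • T) k j := by
      simp_rw [Matrix.mul_apply, Finset.mul_sum]
      exact Finset.sum_comm
    rw [h1, Finset.mul_sum]
    refine Finset.sum_le_sum fun k _ => ?_
    rw [mul_comm s _]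
    exact mul_le_mul_of_nonneg_left (hle_s k) (exp_smul_entry_nonneg hoff hy i k)
  have hn : ∀ n : ℕ, ∀ i, ∑ j, NormedSpace.exp ((y0 * n) • T) i j ≤ s ^ n := by
    intro n
    induction n with
    | zero => intro i; simpa using (usum_zero T i).le
    | succ n ih =>
      intro i
      have hcast : y0 * ((n : ℝ) + 1) = y0 * n + y0 := by ring
      have hnn : (0 : ℝ) ≤ y0 * n := mul_nonneg hy0.le (Nat.cast_nonneg n)
      have h1 := hsub (y0 * n) hnn i
      have h2 : ∑ j, NormedSpace.exp ((y0 * n) • T) i j ≤ s ^ n := ih i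
      calc ∑ j, NormedSpace.exp ((y0 * ((n : ℕ) + 1 : ℕ)) • T) i j
          = ∑ j, NormedSpace.exp ((y0 * n + y0) • T) i j := by push_cast; rw [hcast]
        _ ≤ s * ∑ j, NormedSpace.exp ((y0 * n) • T) i j := h1
        _ ≤ s * s ^ n := mul_le_mul_of_nonneg_left h2 hs_pos.le
        _ = s ^ (n + 1) := by ring
  refine ⟨-Real.log s / y0, by
    have := Real.log_neg hs_pos hs_lt
    exact div_pos (by linarith) hy0, ?_⟩
  intro y hy i
  set δ : ℝ := -Real.log s / y0 with hδ
  set n : ℕ := ⌊y / y0⌋₊ with hn'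
  have hfl : (n : ℝ) ≤ y / y0 := Nat.floor_le (div_nonneg hy hy0.le)
  have hfl2 : y / y0 < n + 1 := Nat.lt_floor_add_one _
  have h1 : y0 * n ≤ y := by
    rw [mul_comm]
    exact (le_div_iff₀ hy0).1 hfl
  have hmem1 : y0 * (n : ℝ) ∈ Ici (0 : ℝ) :=
    mem_Ici.2 (mul_nonneg hy0.le (Nat.cast_nonneg n))
  have h2 := usum_antitoneOn hoff hrow i hmem1 (mem_Ici.2 hy) h1
  have h3 : ∑ j, NormedSpace.exp ((y0 * n) • T) i j ≤ s ^ n := hn n i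
  have hlog : Real.log s < 0 := Real.log_neg hs_pos hs_lt
  have h4 : s ^ n = Real.exp ((n : ℝ) * Real.log s) := by
    rw [Real.exp_nat_mul, Real.exp_log hs_pos]
  have h5 : (n : ℝ) * Real.log s ≤ (y / y0 - 1) * Real.log s := by
    have : y / y0 - 1 ≤ (n : ℝ) := by linarith
    exact mul_le_mul_of_nonpos_right this hlog.le
  have h6 : (y / y0 - 1) * Real.log s = -δ * y - Real.log s := by
    rw [hδ]
    field_simp
  have h7 : s ^ n ≤ Real.exp (-δ * y) * s⁻¹ := by
    rw [h4, ← Real.exp_log hs_pos (x := s)]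
    rw [← Real.exp_neg, ← Real.exp_add]
    apply Real.exp_le_exp.2
    rw [Real.exp_log hs_pos]
    linarith [h5, h6.le]
  have h8 : s⁻¹ ≤ 2 := by
    rw [inv_le_comm₀ hs_pos (by norm_num)]
    linarith
  have h9 : Real.exp (-δ * y) * s⁻¹ ≤ 2 * Real.exp (-δ * y) := by
    rw [mul_comm]
    exact mul_le_mul_of_nonneg_right h8 (Real.exp_pos _).le
  calc ∑ j, NormedSpace.exp (y • T) i j
      ≤ ∑ j, NormedSpace.exp ((y0 * n) • T) i j := h2
    _ ≤ s ^ n := h3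
    _ ≤ Real.exp (-δ * y) * s⁻¹ := h7
    _ ≤ 2 * Real.exp (-δ * y) := h9
lemma continuous_phDens (piv : Fin p → ℝ) (T : Matrix (Fin p) (Fin p) ℝ) :
    Continuous (phDens piv T) := by
  unfold phDens
  refine continuous_finset_sum _ fun i _ => continuous_finset_sum _ fun j _ => ?_
  exact (continuous_const.mul (continuous_expEntry T i j)).mul continuous_const

lemma phDens_nonneg {piv : Fin p → ℝ} {T : Matrix (Fin p) (Fin p) ℝ}
    (hPH : IsPHRepr piv T) {y : ℝ} (hy : 0 ≤ y) : 0 ≤ phDens piv T y := by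
  unfold phDens
  refine Finset.sum_nonneg fun i _ => Finset.sum_nonneg fun j _ => ?_
  refine mul_nonneg (mul_nonneg (hPH.pi_nonneg i)
    (exp_smul_entry_nonneg hPH.offdiag_nonneg hy i j)) ?_
  simpa using hPH.rowsum_nonpos j

lemma phDens_bound {piv : Fin p → ℝ} {T : Matrix (Fin p) (Fin p) ℝ}
    (hPH : IsPHRepr piv T) :
    ∃ δ : ℝ, 0 < δ ∧ ∃ C : ℝ, 0 < C ∧ ∀ y : ℝ, 0 ≤ y →
      phDens piv T y ≤ C * Real.exp (-δ * y) := by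
  obtain ⟨δ, hδ, hb⟩ := tail_exp_bound hPH.offdiag_nonneg hPH.rowsum_nonpos
    (isUnit_det_of_eig hPH.eig_neg)
  set B : ℝ := ∑ j, (-∑ k, T j k) with hB
  have hB0 : 0 ≤ B := Finset.sum_nonneg fun j _ => by simpa using hPH.rowsum_nonpos j
  refine ⟨δ, hδ, 2 * p * B + 1, by positivity, fun y hy => ?_⟩
  have hpiv_le : ∀ i, piv i ≤ 1 := by
    intro i
    rw [← hPH.pi_sum_one]
    exact Finset.single_le_sum (fun k _ => hPH.pi_nonneg k) (Finset.mem_univ i)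
  have hentry : ∀ i j, NormedSpace.exp (y • T) i j ≤ 2 * Real.exp (-δ * y) := by
    intro i j
    refine le_trans ?_ (hb y hy i)
    exact Finset.single_le_sum
      (f := fun j => NormedSpace.exp (y • T) i j)
      (fun k _ => exp_smul_entry_nonneg hPH.offdiag_nonneg hy i k) (Finset.mem_univ j)
  have hterm : ∀ i j, piv i * NormedSpace.exp (y • T) i j * (-∑ k, T j k)
      ≤ (2 * Real.exp (-δ * y)) * (-∑ k, T j k) := by
    intro i j
    have hc : 0 ≤ -∑ k, T j k := by simpa using hPH.rowsum_nonpos j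
    refine mul_le_mul_of_nonneg_right ?_ hc
    have h1 : piv i * NormedSpace.exp (y • T) i j ≤ 1 * (2 * Real.exp (-δ * y)) := by
      refine mul_le_mul (hpiv_le i) (hentry i j)
        (exp_smul_entry_nonneg hPH.offdiag_nonneg hy i j) zero_le_one
    linarith
  calc phDens piv T y
      ≤ ∑ i : Fin p, ∑ j : Fin p, (2 * Real.exp (-δ * y)) * (-∑ k, T j k) := by
        unfold phDens
        exact Finset.sum_le_sum fun i _ => Finset.sum_le_sum fun j _ => hterm i j
    _ = (p : ℝ) * ((2 * Real.exp (-δ * y)) * B) := by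
        rw [Finset.sum_const, ← Finset.mul_sum]
        simp [hB, Finset.card_univ]
    _ ≤ (2 * p * B + 1) * Real.exp (-δ * y) := by
        have := Real.exp_pos (-δ * y)
        nlinarith [Nat.cast_nonneg (α := ℝ) p]

lemma integral_exp_neg_Ioi' {δ : ℝ} (hδ : 0 < δ) (x : ℝ) :
    ∫ y in Ioi x, Real.exp (-δ * y) = Real.exp (-δ * x) / δ := by
  have hderiv : ∀ y ∈ Ioi x, HasDerivAt (fun y => -Real.exp (-δ * y) / δ)
      (Real.exp (-δ * y)) y := by
    intro y _
    have h1 : HasDerivAt (fun y : ℝ => -δ * y) (-δ) y := by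
      simpa using (hasDerivAt_id y).const_mul (-δ)
    have h2 := (h1.exp.neg.div_const δ)
    rw [show Real.exp (-δ * y) = -(Real.exp (-δ * y) * -δ) / δ by field_simp]
    exact h2
  have hint : IntegrableOn (fun y => Real.exp (-δ * y)) (Ioi x) :=
    exp_neg_integrableOn_Ioi x hδ
  have htend : Tendsto (fun y => -Real.exp (-δ * y) / δ) atTop (𝓝 0) := by
    have h3 : Tendsto (fun y : ℝ => -δ * y) atTop atBot :=
      tendsto_id.const_mul_atTop_of_neg (by linarith)
    have := (Real.tendsto_exp_atBot.comp h3).neg.div_const δ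
    simpa using this
  have hcont : ContinuousWithinAt (fun y => -Real.exp (-δ * y) / δ) (Ici x) x := by
    exact (((Real.continuous_exp.comp (continuous_const.mul continuous_id)).neg).div_const
      δ).continuousWithinAt
  have := integral_Ioi_of_hasDerivAt_of_tendsto hcont hderiv hint htend
  rw [this]
  ring

lemma phMeasure_tail {piv : Fin p → ℝ} {T : Matrix (Fin p) (Fin p) ℝ}
    (hPH : IsPHRepr piv T) :
    ∃ δ : ℝ, 0 < δ ∧ ∃ C : ℝ, 0 < C ∧ ∀ x : ℝ, 0 ≤ x →
      (phMeasure piv T (Set.Ioi x)).toReal ≤ C * Real.exp (-δ * x) := by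
  obtain ⟨δ, hδ, C, hC, hb⟩ := phDens_bound hPH
  refine ⟨δ, hδ, C / δ + 1, by positivity, fun x hx => ?_⟩
  have hle : phMeasure piv T (Set.Ioi x)
      ≤ ENNReal.ofReal (C / δ * Real.exp (-δ * x)) := by
    rw [phMeasure, withDensity_apply _ measurableSet_Ioi]
    have h1 : ∫⁻ y in Ioi x, (if 0 < y then ENNReal.ofReal (phDens piv T y) else 0)
        ≤ ∫⁻ y in Ioi x, ENNReal.ofReal (C * Real.exp (-δ * y)) := by
      refine setLIntegral_mono ?_ ?_
      · exact (Real.measurable_exp.comp (measurable_id.const_mul _)).const_mul C |>.ennreal_ofReal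
      · intro y hy
        have hy0 : (0 : ℝ) ≤ y := le_of_lt (lt_of_le_of_lt hx hy)
        split
        · exact ENNReal.ofReal_le_ofReal (hb y hy0)
        · exact zero_le
    have h2 : ∫⁻ y in Ioi x, ENNReal.ofReal (C * Real.exp (-δ * y))
        = ENNReal.ofReal (∫ y in Ioi x, C * Real.exp (-δ * y)) := by
      rw [← ofReal_integral_eq_lintegral_ofReal]
      · exact (exp_neg_integrableOn_Ioi x hδ).const_mul C
      · exact ae_of_all _ fun y => by positivity
    have h3 : ∫ y in Ioi x, C * Real.exp (-δ * y) = C / δ * Real.exp (-δ * x) := by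
      rw [integral_const_mul, integral_exp_neg_Ioi' hδ]
      ring
    calc ∫⁻ y in Ioi x, (if 0 < y then ENNReal.ofReal (phDens piv T y) else 0)
        ≤ ∫⁻ y in Ioi x, ENNReal.ofReal (C * Real.exp (-δ * y)) := h1
      _ = ENNReal.ofReal (C / δ * Real.exp (-δ * x)) := by rw [h2, h3]
  have h4 := ENNReal.toReal_le_of_le_ofReal (by positivity) hle
  refine le_trans h4 ?_
  have := Real.exp_pos (-δ * x)
  nlinarith
lemma longTailed_tail_lower (μ : Measure ℝ) [IsFiniteMeasure μ] (h : LongTailed μ)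
    {ε : ℝ} (hε : 0 < ε) :
    ∃ c : ℝ, 0 < c ∧ ∃ x0 : ℝ, ∀ x : ℝ, x0 ≤ x →
      c * Real.exp (-ε * x) ≤ (μ (Set.Ioi x)).toReal := by
  set G : ℝ → ℝ := fun x => (μ (Set.Ioi x)).toReal with hG
  have hGpos : ∀ x, 0 < G x := fun x =>
    ENNReal.toReal_pos (h.1 x).ne' (measure_ne_top μ _)
  have hGanti : ∀ {x y : ℝ}, x ≤ y → G y ≤ G x := by
    intro x y hxy
    exact ENNReal.toReal_mono (measure_ne_top μ _) (measure_mono (Ioi_subset_Ioi hxy))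
  have hlim := h.2 1
  have hev : ∀ᶠ x in atTop, G (x - 1) / G x < Real.exp ε :=
    hlim.eventually_lt_const (Real.one_lt_exp_iff.2 hε)
  obtain ⟨x0, hx0⟩ := eventually_atTop.1 hev
  have hstep : ∀ x : ℝ, x0 ≤ x → Real.exp (-ε) * G (x - 1) ≤ G x := by
    intro x hx
    have h1 := hx0 x hx
    have h2 : G (x - 1) < Real.exp ε * G x := by
      rw [div_lt_iff₀ (hGpos x)] at h1
      linarith [h1]
    have h3 := Real.exp_pos (-ε)
    have h4 : Real.exp (-ε) * Real.exp ε = 1 := by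
      rw [← Real.exp_add]; simp
    nlinarith [hGpos x, h2]
  have hIH : ∀ n : ℕ, ∀ x : ℝ, x0 ≤ x → x ≤ x0 + n + 1 →
      Real.exp (-ε * (n + 1)) * G x0 ≤ G x := by
    intro n
    induction n with
    | zero =>
      intro x hx hx1
      push_cast at hx1
      have h1 := hstep x hx
      have h2 : G x0 ≤ G (x - 1) := hGanti (by linarith)
      have h3 := Real.exp_pos (-ε)
      calc Real.exp (-ε * ((0 : ℕ) + 1)) * G x0 = Real.exp (-ε) * G x0 := by norm_num
        _ ≤ Real.exp (-ε) * G (x - 1) := by nlinarith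
        _ ≤ G x := h1
    | succ n ih =>
      intro x hx hx1
      rcases le_or_gt x (x0 + n + 1) with hc | hc
      · refine le_trans ?_ (ih x hx hc)
        have h1 : -ε * ((n : ℝ) + 1 + 1) ≤ -ε * ((n : ℝ) + 1) := by nlinarith
        have := Real.exp_le_exp.2 h1
        have := (hGpos x0).le
        push_cast
        nlinarith [Real.exp_pos (-ε * ((n : ℝ) + 1))]
      · have hx1' : x - 1 ≤ x0 + n + 1 := by push_cast at hx1 ⊢; linarith
        have hx0' : x0 ≤ x - 1 := by linarith
        have h1 := ih (x - 1) hx0' hx1'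
        have h2 := hstep x (by linarith)
        have h3 : Real.exp (-ε * ((n : ℝ) + 1 + 1)) = Real.exp (-ε) * Real.exp (-ε * ((n : ℝ) + 1)) := by
          rw [← Real.exp_add]; ring_nf
        push_cast
        rw [h3]
        have h4 := Real.exp_pos (-ε)
        calc Real.exp (-ε) * Real.exp (-ε * ((n : ℝ) + 1)) * G x0
            = Real.exp (-ε) * (Real.exp (-ε * ((n : ℝ) + 1)) * G x0) := by ring
          _ ≤ Real.exp (-ε) * G (x - 1) := by nlinarith
          _ ≤ G x := h2
  refine ⟨Real.exp (ε * x0 - 2 * ε) * G x0, mul_pos (Real.exp_pos _) (hGpos x0), x0, fun x hx => ?_⟩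
  set n : ℕ := ⌈x - x0⌉₊ with hn
  have h1 : x - x0 ≤ n := Nat.le_ceil _
  have h2 : (n : ℝ) < (x - x0) + 1 := by
    have := Nat.ceil_lt_add_one (by linarith : (0:ℝ) ≤ x - x0)
    exact_mod_cast this
  have h3 := hIH n x hx (by linarith)
  have h4 : -ε * ((x - x0) + 2) ≤ -ε * ((n : ℝ) + 1) := by nlinarith
  have h5 : Real.exp (-ε * ((x - x0) + 2)) ≤ Real.exp (-ε * ((n : ℝ) + 1)) :=
    Real.exp_le_exp.2 h4
  have h6 : Real.exp (ε * x0 - 2 * ε) * G x0 * Real.exp (-ε * x)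
      = Real.exp (-ε * ((x - x0) + 2)) * G x0 := by
    rw [mul_comm (Real.exp (ε * x0 - 2 * ε) * G x0) _, ← mul_assoc, ← Real.exp_add]
    ring_nf
  calc Real.exp (ε * x0 - 2 * ε) * G x0 * Real.exp (-ε * x)
      = Real.exp (-ε * ((x - x0) + 2)) * G x0 := h6
    _ ≤ Real.exp (-ε * ((n : ℝ) + 1)) * G x0 := by nlinarith [(hGpos x0).le]
    _ ≤ G x := h3
end PHaux


/-- if `V ≥ 0` has long-tailed law and `Y ~ PH(π,T)` is independent of `V`,
then for every `b > 0`, `F̄_Y(x) = o(F̄_{VY}(bx))` as `x → ∞`. -/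
theorem ph_tail_negligible_of_longTailed
    {Ω : Type*} [MeasureSpace Ω] [IsProbabilityMeasure (ℙ : Measure Ω)]
    {p : ℕ} (piv : Fin p → ℝ) (T : Matrix (Fin p) (Fin p) ℝ) (hPH : IsPHRepr piv T)
    (V Y : Ω → ℝ) (hVm : Measurable V) (hYm : Measurable Y)
    (hInd : IndepFun V Y ℙ)
    (hVnn : ∀ᵐ ω ∂ℙ, 0 ≤ V ω)
    (hVlong : LongTailed (Measure.map V ℙ))
    (hYlaw : Measure.map Y ℙ = phMeasure piv T) :
    ∀ b : ℝ, 0 < b →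
      Tendsto
        (fun x => (ℙ {ω | Y ω > x}).toReal / (ℙ {ω | V ω * Y ω > b * x}).toReal)
        atTop (𝓝 0) := by
  intro b hb
  classical
  haveI hprobY : IsProbabilityMeasure (Measure.map Y ℙ) :=
    Measure.isProbabilityMeasure_map hYm.aemeasurable
  haveI hprobV : IsProbabilityMeasure (Measure.map V ℙ) :=
    Measure.isProbabilityMeasure_map hVm.aemeasurable
  obtain ⟨δ, hδ, C, hC, htail⟩ := PHaux.phMeasure_tail hPH
  -- the law of Y puts no mass on (-∞, 0]
  have hIic : phMeasure piv T (Set.Iic 0) = 0 := by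
    rw [phMeasure, withDensity_apply _ measurableSet_Iic]
    have : ∀ᵐ y ∂(volume.restrict (Set.Iic (0:ℝ))),
        (if 0 < y then ENNReal.ofReal (phDens piv T y) else 0) = 0 := by
      refine (ae_restrict_iff' measurableSet_Iic).2 (ae_of_all _ fun y hy => ?_)
      simp only [mem_Iic] at hy
      rw [if_neg (not_lt.2 hy)]
    rw [lintegral_congr_ae this, lintegral_zero]
  have hIoi0 : 0 < phMeasure piv T (Set.Ioi 0) := by
    have huniv : phMeasure piv T Set.univ = 1 := by
      rw [← hYlaw]; exact measure_univ
    by_contra hcon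
    push_neg at hcon
    have h0 : phMeasure piv T (Set.Ioi 0) = 0 := le_antisymm hcon (zero_le)
    have hle : phMeasure piv T Set.univ ≤ 0 := by
      rw [← Set.Iic_union_Ioi (a := (0:ℝ))]
      refine le_trans (measure_union_le _ _) ?_
      rw [hIic, h0]; simp
    rw [huniv] at hle
    simp at hle
  -- find y1 > 0 with positive tail
  have hy1 : ∃ y1 : ℝ, 0 < y1 ∧ 0 < phMeasure piv T (Set.Ioi y1) := by
    by_contra hcon
    push_neg at hcon
    have hall : ∀ n : ℕ, phMeasure piv T (Set.Ioi ((n : ℝ) + 1)⁻¹) = 0 := fun n =>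
      le_antisymm (hcon _ (by positivity)) (zero_le)
    have hsub : Set.Ioi (0:ℝ) ⊆ ⋃ n : ℕ, Set.Ioi ((n : ℝ) + 1)⁻¹ := by
      intro y hy
      simp only [mem_Ioi] at hy
      simp only [mem_iUnion, mem_Ioi]
      obtain ⟨n, hn⟩ := exists_nat_gt y⁻¹
      refine ⟨n, ?_⟩
      have h1 : (0:ℝ) < (n : ℝ) + 1 := by positivity
      rw [inv_lt_comm₀ h1 hy]
      linarith
    have : phMeasure piv T (Set.Ioi 0) = 0 := by
      refine le_antisymm (le_trans (measure_mono hsub) ?_) (zero_le)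
      refine le_trans (measure_iUnion_le _) ?_
      simp [hall]
    exact absurd this hIoi0.ne'
  obtain ⟨y1, hy1pos, hq⟩ := hy1
  have hqY : 0 < ℙ (Y ⁻¹' Set.Ioi y1) := by
    rw [← Measure.map_apply hYm measurableSet_Ioi, hYlaw]; exact hq
  set qr : ℝ := (ℙ (Y ⁻¹' Set.Ioi y1)).toReal with hqrdef
  have hqr : 0 < qr := ENNReal.toReal_pos hqY.ne' (measure_ne_top _ _)
  set ε : ℝ := δ * y1 / (2 * b) with hεdef
  have hε : 0 < ε := by positivity
  obtain ⟨c, hc, x0, hlow⟩ := PHaux.longTailed_tail_lower (Measure.map V ℙ) hVlong hε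
  -- numerator bound
  have hNle : ∀ x : ℝ, 0 ≤ x → (ℙ {ω | Y ω > x}).toReal ≤ C * Real.exp (-δ * x) := by
    intro x hx
    have : {ω | Y ω > x} = Y ⁻¹' (Set.Ioi x) := rfl
    rw [this, ← Measure.map_apply hYm measurableSet_Ioi, hYlaw]
    exact htail x hx
  -- denominator bound
  have hDge : ∀ x : ℝ, 0 < x → x0 ≤ b * x / y1 →
      (c * Real.exp (-ε * (b * x / y1))) * qr
        ≤ (ℙ {ω | V ω * Y ω > b * x}).toReal := by
    intro x hx hx0
    set cx : ℝ := b * x / y1 with hcxdef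
    have hcx : 0 < cx := by positivity
    have hsubset : V ⁻¹' (Set.Ioi cx) ∩ Y ⁻¹' (Set.Ioi y1) ⊆ {ω | V ω * Y ω > b * x} := by
      rintro ω ⟨h1, h2⟩
      simp only [mem_preimage, mem_Ioi] at h1 h2
      have hlt : cx * y1 < V ω * Y ω := mul_lt_mul'' h1 h2 hcx.le hy1pos.le
      have hcxy : cx * y1 = b * x := by
        rw [hcxdef]; field_simp
      show b * x < V ω * Y ω
      rw [← hcxy]; exact hlt
    have hmul := hInd.measure_inter_preimage_eq_mul (Set.Ioi cx) (Set.Ioi y1)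
      measurableSet_Ioi measurableSet_Ioi
    have hle := measure_mono (μ := (ℙ : Measure Ω)) hsubset
    rw [hmul] at hle
    have hle2 := ENNReal.toReal_mono (measure_ne_top ℙ _) hle
    rw [ENNReal.toReal_mul] at hle2
    refine le_trans ?_ hle2
    have hVx : (ℙ (V ⁻¹' Set.Ioi cx)).toReal = ((Measure.map V ℙ) (Set.Ioi cx)).toReal := by
      rw [Measure.map_apply hVm measurableSet_Ioi]
    rw [hVx]
    exact mul_le_mul_of_nonneg_right (hlow cx hx0) ENNReal.toReal_nonneg
  -- limit of the bounding function
  have hg : Tendsto (fun x : ℝ => (C / (c * qr)) * Real.exp (-(δ/2) * x)) atTop (𝓝 0) := by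
    have h3 : Tendsto (fun y : ℝ => -(δ/2) * y) atTop atBot :=
      tendsto_id.const_mul_atTop_of_neg (by linarith)
    have h4 := (Real.tendsto_exp_atBot.comp h3).const_mul (C / (c * qr))
    simpa using h4
  refine squeeze_zero' (Eventually.of_forall fun x =>
    div_nonneg ENNReal.toReal_nonneg ENNReal.toReal_nonneg) ?_ hg
  filter_upwards [eventually_ge_atTop (1 : ℝ), eventually_ge_atTop (x0 * y1 / b)]
    with x hx1 hx2
  have hxpos : (0:ℝ) < x := lt_of_lt_of_le one_pos hx1
  have hcx0 : x0 ≤ b * x / y1 := by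
    rw [le_div_iff₀ hy1pos]
    rw [div_le_iff₀ hb] at hx2
    linarith
  have hN := hNle x hxpos.le
  have hD := hDge x hxpos hcx0
  have hεcx : -ε * (b * x / y1) = -(δ/2) * x := by
    rw [hεdef]
    field_simp
  rw [hεcx] at hD
  have hDpos : 0 < (c * Real.exp (-(δ/2) * x)) * qr := by positivity
  have hsplit : Real.exp (-δ * x) = Real.exp (-(δ/2) * x) * Real.exp (-(δ/2) * x) := by
    rw [← Real.exp_add]; ring_nf
  calc (ℙ {ω | Y ω > x}).toReal / (ℙ {ω | V ω * Y ω > b * x}).toReal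
      ≤ (C * Real.exp (-δ * x)) / ((c * Real.exp (-(δ/2) * x)) * qr) :=
        div_le_div₀ (by positivity) hN hDpos hD
    _ = (C / (c * qr)) * Real.exp (-(δ/2) * x) := by
        rw [hsplit]
        have h1 := Real.exp_ne_zero (-(δ/2) * x)
        field_simp
end
end
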